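/- arXiv:1907.02004 — 5 statements merged into one kernel-verified Lean document; each statement's English description precedes it below -/
import Mathlib

section
/- For all integers k ≥ 2 and all n ≥ 3 divisible by k, there exists a balanced k-partite graph F on n vertices such that δ(F) ≥ ⌈n/2⌉ + ⌊(n+2)/(2·⌈(k+1)/2⌉)⌋ − n/k − 1, F contains an independent set of size ⌈(n+1)/2⌉, and F does not have a Hamiltonian cycle. -/
open SimpleGraph Finset

/-- `G` is a balanced `k`-partite graph: the vertex set can be partitioned into `k` parts,
each of size `|V|/k`, such that every edge joins vertices in different parts. -/
def IsBalancedKPartite {V : Type*} [Fintype V] [DecidableEq V]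
    (G : SimpleGraph V) (k : ℕ) : Prop :=
  ∃ P : V → Fin k,
    (∀ i : Fin k, (Finset.univ.filter fun v => P v = i).card = Fintype.card V / k) ∧
    (∀ u v : V, G.Adj u v → P u ≠ P v)

/-- The degree bound `⌈n/2⌉ + ⌊(n+2)/(2⌈(k+1)/2⌉)⌋ − n/k`, as a rational number. -/
def degBound (n k : ℕ) : ℚ :=
  (⌈(n : ℚ) / 2⌉ : ℚ) + (⌊((n : ℚ) + 2) / (2 * (⌈((k : ℚ) + 1) / 2⌉ : ℚ))⌋ : ℚ) - (n : ℚ) / k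

lemma card_fin_filter {n : ℕ} (p : ℕ → Prop) [DecidablePred p] :
    ((Finset.univ : Finset (Fin n)).filter (fun v => p v.val)).card
      = ((Finset.range n).filter p).card := by
  apply Finset.card_nbij (fun v => v.val)
  · intro a ha
    simp only [Finset.mem_coe, Finset.mem_filter, Finset.mem_univ, true_and] at ha
    simp only [Finset.mem_coe, Finset.mem_filter, Finset.mem_range]
    exact ⟨a.isLt, ha⟩
  · intro a _ b _ h
    exact Fin.val_injective h
  · intro b hb
    simp only [Finset.coe_filter, Finset.mem_range, Set.mem_setOf_eq] at hb
    exact ⟨⟨b, hb.1⟩, by simp [hb.2], rfl⟩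

lemma count_Ico {n a b : ℕ} (h : b ≤ n) :
    ((Finset.range n).filter (fun v => a ≤ v ∧ v < b)).card = b - a := by
  have he : (Finset.range n).filter (fun v => a ≤ v ∧ v < b) = Finset.Ico a b := by
    ext x
    simp only [Finset.mem_filter, Finset.mem_range, Finset.mem_Ico]
    omega
  rw [he, Nat.card_Ico]

lemma divmod_interval {m i t x : ℕ} (hm : 0 < m) (ht : t ≤ m) :
    (x / m = i ∧ x % m < t) ↔ (i * m ≤ x ∧ x < i * m + t) := by
  have h3 : m * (x / m) + x % m = x := Nat.div_add_mod x m
  have hc : m * i = i * m := Nat.mul_comm m i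
  constructor
  · rintro ⟨h1, h2⟩
    rw [h1] at h3
    omega
  · rintro ⟨h1, h2⟩
    have hdiv : x / m = i := Nat.div_eq_of_lt_le h1 (by
      show x < (i + 1) * m
      have : (i + 1) * m = i * m + m := by ring
      omega)
    rw [hdiv] at h3
    exact ⟨hdiv, by omega⟩



lemma not_ham_of_indep {V : Type*} [Fintype V] [DecidableEq V] (G : SimpleGraph V)
    (S : Finset V) (hind : ∀ u ∈ S, ∀ v ∈ S, ¬ G.Adj u v)
    (hV1 : Fintype.card V ≠ 1)
    (hcard : Fintype.card V < 2 * S.card) : ¬ G.IsHamiltonian := by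
  intro hham
  obtain ⟨a, p, hp⟩ := hham hV1
  have hnn : ¬ p.Nil := hp.1.not_nil
  obtain ⟨l, hsupp⟩ : ∃ l, p.support = a :: l := ⟨p.support.tail, p.support_eq_cons⟩
  have hltail : p.support.tail = l := by rw [hsupp]; rfl
  have hlen : l.length = Fintype.card V := by
    have h1 : p.tail.support = l := by rw [Walk.support_tail_of_not_nil p hnn, hltail]
    have h2 := hp.isHamiltonian_tail.length_eq
    have h3 : p.tail.support.length = p.tail.length + 1 := Walk.length_support _
    have hpos : 0 < Fintype.card V := Fintype.card_pos_iff.mpr ⟨a⟩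
    rw [h1] at h3
    omega
  have hpos : 0 < l.length := by
    rw [hlen]; exact Fintype.card_pos_iff.mpr ⟨a⟩
  have hnodup : l.Nodup := by
    have := hp.1.support_nodup; rwa [hltail] at this
  have hmem : ∀ v : V, v ∈ l := by
    intro v
    have := hp.isHamiltonian_tail.mem_support v
    rwa [Walk.support_tail_of_not_nil p hnn, hltail] at this
  have hchain : List.Chain' G.Adj (a :: l) := hsupp ▸ p.isChain_adj_support
  have hs : ∀ i : ℕ, (h : i + 1 < l.length + 1) → G.Adj ((a::l).get ⟨i, by simp; omega⟩)
      ((a::l).get ⟨i+1, by simp; omega⟩) := by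
    rw [show List.Chain' G.Adj (a :: l) ↔ _ from List.isChain_iff_getElem] at hchain
    intro i h
    exact hchain i (by simpa using h)
  have hadj1 : ∀ i : ℕ, (h : i + 1 < l.length) → G.Adj l[i] l[i+1] := by
    intro i h
    have := hs (i+1) (by omega)
    simpa using this
  have hadj0 : G.Adj a l[0] := by
    have := hs 0 (by omega)
    simpa using this
  have hlast : l[l.length - 1]'(by omega) = a := by
    have h1 : ∀ (hne : p.support ≠ []), p.support.getLast hne = a :=
      fun _ => p.getLast_support
    rw [hsupp] at h1
    have hlne : l ≠ [] := List.ne_nil_of_length_pos hpos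
    have h2 := h1 (List.cons_ne_nil a l)
    rw [List.getLast_cons hlne] at h2
    rwa [List.getLast_eq_getElem] at h2
  have hadj : ∀ i : ℕ, (h : i < l.length) →
      G.Adj l[i] (l[(i+1) % l.length]'(Nat.mod_lt _ hpos)) := by
    intro i h
    rcases Nat.lt_or_ge (i+1) l.length with h2 | h2
    · have hm : (i+1) % l.length = i + 1 := Nat.mod_eq_of_lt h2
      simp only [hm]
      exact hadj1 i h2
    · have hi : i + 1 = l.length := by omega
      have hm : (i+1) % l.length = 0 := by rw [hi, Nat.mod_self]
      simp only [hm]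
      have : l[i] = a := by rw [← hlast]; congr 1; omega
      rw [this]
      exact hadj0
  let nxt : V → V := fun v =>
    l[(l.idxOf v + 1) % l.length]'(Nat.mod_lt _ hpos)
  have hadjnxt : ∀ v, G.Adj v (nxt v) := by
    intro v
    have hidx : l.idxOf v < l.length := List.idxOf_lt_length_iff.2 (hmem v)
    have hv : l[l.idxOf v] = v := List.getElem_idxOf hidx
    have := hadj (l.idxOf v) hidx
    rwa [hv] at this
  have hinj : Function.Injective nxt := by
    intro u v huv
    have hu : l.idxOf u < l.length := List.idxOf_lt_length_iff.2 (hmem u)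
    have hv : l.idxOf v < l.length := List.idxOf_lt_length_iff.2 (hmem v)
    have heq' : (⟨(l.idxOf u + 1) % l.length, Nat.mod_lt _ hpos⟩ : Fin l.length)
        = ⟨(l.idxOf v + 1) % l.length, Nat.mod_lt _ hpos⟩ :=
      (List.nodup_iff_injective_getElem.1 hnodup) huv
    have heq : (l.idxOf u + 1) % l.length = (l.idxOf v + 1) % l.length := by
      simpa using heq'
    have hiuv : l.idxOf u = l.idxOf v := by
      rcases Nat.lt_or_ge (l.idxOf u + 1) l.length with h1 | h1 <;>
        rcases Nat.lt_or_ge (l.idxOf v + 1) l.length with h2 | h2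
      · rw [Nat.mod_eq_of_lt h1, Nat.mod_eq_of_lt h2] at heq; omega
      · rw [Nat.mod_eq_of_lt h1, show l.idxOf v + 1 = l.length by omega,
          Nat.mod_self] at heq; omega
      · rw [Nat.mod_eq_of_lt h2, show l.idxOf u + 1 = l.length by omega,
          Nat.mod_self] at heq; omega
      · omega
    calc u = l[l.idxOf u] := (List.getElem_idxOf hu).symm
    _ = l[l.idxOf v]'hv := by congr 1
    _ = v := List.getElem_idxOf hv
  have hdisj : Disjoint S (S.image nxt) := by
    rw [Finset.disjoint_right]
    intro w hw hwS
    obtain ⟨u, hu, rfl⟩ := Finset.mem_image.1 hw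
    exact hind u hu _ hwS (hadjnxt u)
  have hle : S.card + (S.image nxt).card ≤ Fintype.card V := by
    rw [← Finset.card_union_of_disjoint hdisj]
    exact (S ∪ S.image nxt).card_le_univ.trans_eq Finset.card_univ
  rw [Finset.card_image_of_injective _ hinj] at hle
  omega

/-- **Tightness example.** For all `k ≥ 2` and `n ≥ 3` divisible by `k` there is a balanced
`k`-partite graph `F` on `n` vertices with minimum degree at least
`⌈n/2⌉ + ⌊(n+2)/(2⌈(k+1)/2⌉)⌋ − n/k − 1`, containing an independent set of size `⌈(n+1)/2⌉`,
which has no Hamiltonian cycle. -/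
theorem exists_tight_example (k n : ℕ) (hk : 2 ≤ k) (hn : 3 ≤ n) (hdvd : k ∣ n) :
    ∃ F : SimpleGraph (Fin n),
      IsBalancedKPartite F k ∧
      (∀ v : Fin n, degBound n k - 1 ≤ ((F.neighborSet v).ncard : ℚ)) ∧
      (∃ s : Finset (Fin n), s.card = ⌈((n : ℚ) + 1) / 2⌉ ∧
        ∀ u ∈ s, ∀ v ∈ s, u ≠ v → ¬ F.Adj u v) ∧
      ¬ F.IsHamiltonian := by

  classical
  obtain ⟨m, hnm⟩ := hdvd
  have hm1 : 1 ≤ m := by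
    rcases Nat.eq_zero_or_pos m with h | h
    · rw [h, Nat.mul_zero] at hnm; omega
    · exact h
  have hkn : k ≤ n := by
    have := Nat.mul_le_mul_left k hm1
    rw [Nat.mul_one] at this
    omega
  have h2m : 2 * m ≤ n := by
    have := Nat.mul_le_mul_right m hk
    omega
  -- numeric parameters
  set l : ℕ := (k + 2) / 2 with hl
  have hl2 : 2 ≤ l := by omega
  have hlk : l ≤ k := by omega
  set s : ℕ := n / 2 + 1 with hsdef
  set q : ℕ := s / l with hqdef
  set r : ℕ := s % l with hrdef
  have hsql : l * q + r = s := Nat.div_add_mod s l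
  have hrl : r < l := Nat.mod_lt _ (by omega)
  have hslm : s ≤ l * m := by
    rcases Nat.even_or_odd k with ⟨t, ht⟩ | ⟨t, ht⟩
    · have h1 : k * m = t * m + t * m := by rw [ht]; ring
      have hlt : l = t + 1 := by omega
      have h2 : l * m = t * m + m := by rw [hlt]; ring
      omega
    · have hlt : l = t + 1 := by omega
      have h1 : k * m = 2 * (t * m) + m := by rw [ht]; ring
      have h2 : l * m = t * m + m := by rw [hlt]; ring
      omega
  have hqm : q ≤ m := by
    refine Nat.le_of_mul_le_mul_left ?_ (show 0 < l by omega)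
    omega
  have hqm' : 0 < r → q < m := by
    intro hr0
    refine Nat.lt_of_mul_lt_mul_left (a := l) ?_
    omega
  have hq1 : 1 ≤ q := by
    rw [hqdef]
    rw [Nat.one_le_div_iff (by omega)]
    omega
  set a : ℕ → ℕ := fun i => q + (if i < r then 1 else 0) with hadef
  have ham : ∀ i, a i ≤ m := by
    intro i
    rw [hadef]
    simp only
    split
    · have := hqm' (by omega); omega
    · omega
  have haq : ∀ i, q ≤ a i := by intro i; rw [hadef]; simp only; split <;> omega
  -- the independent set predicate (on ℕ)
  set SpN : ℕ → Prop := fun x => x / m < l ∧ x % m < a (x / m) with hSpN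
  -- the graph
  set F : SimpleGraph (Fin n) :=
    { Adj := fun u v => (u.val / m ≠ v.val / m) ∧ ¬(SpN u.val ∧ SpN v.val)
      symm := by
        refine ⟨fun u v hadj => ?_⟩
        exact ⟨Ne.symm hadj.1, fun h => hadj.2 ⟨h.2, h.1⟩⟩
      loopless := ⟨fun v hadj => hadj.1 rfl⟩ } with hF
  have hAdjIff : ∀ u v : Fin n, F.Adj u v ↔
      ((u.val / m ≠ v.val / m) ∧ ¬(SpN u.val ∧ SpN v.val)) := by
    intro u v; rw [hF]
  -- the independent set
  set S : Finset (Fin n) := Finset.univ.filter (fun v => SpN v.val) with hS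
  -- counting lemmas
  have hcountN : ∀ i t : ℕ, i < k → t ≤ m →
      ((Finset.range n).filter (fun x => x / m = i ∧ x % m < t)).card = t := by
    intro i t hik htm
    have hbn : i * m + t ≤ n := by
      have h1 : (i + 1) * m ≤ k * m := Nat.mul_le_mul_right m (by omega)
      have h2 : (i + 1) * m = i * m + m := by ring
      omega
    have he : (Finset.range n).filter (fun x => x / m = i ∧ x % m < t)
        = (Finset.range n).filter (fun x => i * m ≤ x ∧ x < i * m + t) := by
      apply Finset.filter_congr
      intro x _
      exact_mod_cast divmod_interval (by omega) htm
    rw [he, count_Ico hbn]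
    omega
  have hcount : ∀ i t : ℕ, i < k → t ≤ m →
      ((Finset.univ : Finset (Fin n)).filter (fun v => v.val / m = i ∧ v.val % m < t)).card
        = t := by
    intro i t hik htm
    rw [card_fin_filter (fun x => x / m = i ∧ x % m < t)]
    exact hcountN i t hik htm
  have hpart : ∀ i : ℕ, i < k →
      ((Finset.univ : Finset (Fin n)).filter (fun v => v.val / m = i)).card = m := by
    intro i hik
    have he : (Finset.univ : Finset (Fin n)).filter (fun v => v.val / m = i)
        = (Finset.univ : Finset (Fin n)).filter (fun v => v.val / m = i ∧ v.val % m < m) := by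
      apply Finset.filter_congr
      intro x _
      have : x.val % m < m := Nat.mod_lt _ (by omega)
      tauto
    rw [he]
    exact hcount i m hik le_rfl
  have hdivlt : ∀ v : Fin n, v.val / m < k := by
    intro v
    rw [Nat.div_lt_iff_lt_mul (by omega)]
    have := v.isLt
    omega
  -- card of S
  have hsum : ∑ i ∈ Finset.range l, a i = s := by
    rw [hadef]
    rw [Finset.sum_add_distrib, Finset.sum_const]
    simp only [Finset.card_range, smul_eq_mul]
    have h1 : ∑ i ∈ Finset.range l, (if i < r then 1 else 0) = r := by
      rw [← Finset.sum_filter]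
      have : (Finset.range l).filter (fun i => i < r) = Finset.range r := by
        ext x
        simp only [Finset.mem_filter, Finset.mem_range]
        omega
      rw [this]
      simp
    rw [h1]
    push_cast
    omega
  have hScard : S.card = s := by
    rw [hS, card_fin_filter SpN]
    rw [Finset.card_eq_sum_card_fiberwise
      (f := fun x => x / m) (t := Finset.range l)
      (by intro x hx; simp only [Finset.mem_coe, Finset.mem_filter, Finset.mem_range] at hx ⊢; exact hx.2.1)]
    rw [← hsum]
    apply Finset.sum_congr rfl
    intro i hi
    rw [Finset.mem_range] at hi
    rw [Finset.filter_filter]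
    have he : (Finset.range n).filter (fun x => SpN x ∧ x / m = i)
        = (Finset.range n).filter (fun x => x / m = i ∧ x % m < a i) := by
      apply Finset.filter_congr
      intro x _
      rw [hSpN]
      simp only
      constructor
      · rintro ⟨⟨_, h2⟩, h3⟩; rw [h3] at h2; exact ⟨h3, h2⟩
      · rintro ⟨h1, h2⟩; rw [h1]; exact ⟨⟨hi, h2⟩, rfl⟩
    rw [he]
    exact hcountN i (a i) (by omega) (ham i)
  -- degrees
  have hncard : ∀ v : Fin n, (F.neighborSet v).ncard
      = ((Finset.univ : Finset (Fin n)).filter (fun u => F.Adj v u)).card := by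
    intro v
    have : F.neighborSet v = ↑((Finset.univ : Finset (Fin n)).filter (fun u => F.Adj v u)) := by
      ext u
      simp [SimpleGraph.mem_neighborSet]
    rw [this, Set.ncard_coe_finset]
  have hdeg_notS : ∀ v : Fin n, ¬ SpN v.val →
      ((Finset.univ : Finset (Fin n)).filter (fun u => F.Adj v u)).card = n - m := by
    intro v hv
    have he : (Finset.univ : Finset (Fin n)).filter (fun u => F.Adj v u)
        = (Finset.univ : Finset (Fin n)).filter (fun u => ¬ (u.val / m = v.val / m)) := by
      apply Finset.filter_congr
      intro u _
      rw [hAdjIff]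
      constructor
      · rintro ⟨h1, _⟩ he; exact h1 he.symm
      · intro h; exact ⟨fun he => h he.symm, fun hc => hv hc.1⟩
    rw [he]
    have hp := Finset.card_filter_add_card_filter_not
      (s := (Finset.univ : Finset (Fin n))) (p := fun u : Fin n => u.val / m = v.val / m)
    have hcu : (Finset.univ : Finset (Fin n)).card = n := by simp
    have h2 := hpart (v.val / m) (hdivlt v)
    omega
  have hdeg_S : ∀ v : Fin n, SpN v.val →
      ((Finset.univ : Finset (Fin n)).filter (fun u => F.Adj v u)).card
        = n - (m + s - a (v.val / m)) := by
    intro v hv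
    have hil : v.val / m < l := hv.1
    have he : (Finset.univ : Finset (Fin n)).filter (fun u => F.Adj v u)
        = (Finset.univ : Finset (Fin n)).filter
            (fun u => ¬ (u.val / m = v.val / m ∨ SpN u.val)) := by
      apply Finset.filter_congr
      intro u _
      rw [hAdjIff]
      constructor
      · rintro ⟨h1, h2⟩ hcon
        rcases hcon with hc | hc
        · exact h1 hc.symm
        · exact h2 ⟨hv, hc⟩
      · intro h
        exact ⟨fun he => h (Or.inl he.symm), fun hc => h (Or.inr hc.2)⟩
    rw [he]
    have hp := Finset.card_filter_add_card_filter_not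
      (s := (Finset.univ : Finset (Fin n)))
      (p := fun u : Fin n => u.val / m = v.val / m ∨ SpN u.val)
    have hcu : (Finset.univ : Finset (Fin n)).card = n := by simp
    -- card of the union
    have hor : (Finset.univ : Finset (Fin n)).filter
          (fun u => u.val / m = v.val / m ∨ SpN u.val)
        = ((Finset.univ : Finset (Fin n)).filter (fun u => u.val / m = v.val / m))
          ∪ ((Finset.univ : Finset (Fin n)).filter (fun u => SpN u.val)) := by
      rw [Finset.filter_or]
    have hand : (Finset.univ : Finset (Fin n)).filter
          (fun u => u.val / m = v.val / m ∧ SpN u.val)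
        = ((Finset.univ : Finset (Fin n)).filter (fun u => u.val / m = v.val / m))
          ∩ ((Finset.univ : Finset (Fin n)).filter (fun u => SpN u.val)) := by
      rw [Finset.filter_and]
    have hinter : ((Finset.univ : Finset (Fin n)).filter
          (fun u => u.val / m = v.val / m ∧ SpN u.val)).card = a (v.val / m) := by
      have he2 : (Finset.univ : Finset (Fin n)).filter
            (fun u => u.val / m = v.val / m ∧ SpN u.val)
          = (Finset.univ : Finset (Fin n)).filter
            (fun u => u.val / m = v.val / m ∧ u.val % m < a (v.val / m)) := by
        apply Finset.filter_congr
        intro u _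
        rw [hSpN]
        simp only
        constructor
        · rintro ⟨h1, _, h3⟩; rw [h1] at h3; exact ⟨h1, h3⟩
        · rintro ⟨h1, h2⟩; rw [h1]; exact ⟨rfl, hil, h2⟩
      rw [he2]
      exact hcount (v.val / m) (a (v.val / m)) (hdivlt v) (ham _)
    have hunion := Finset.card_union_add_card_inter
      ((Finset.univ : Finset (Fin n)).filter (fun u => u.val / m = v.val / m))
      ((Finset.univ : Finset (Fin n)).filter (fun u => SpN u.val))
    have hSc : ((Finset.univ : Finset (Fin n)).filter (fun u => SpN u.val)).card = s := by
      rw [← hS] at *; exact hScard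
    have h2 := hpart (v.val / m) (hdivlt v)
    rw [hand] at hinter
    rw [hor] at hp
    have hai := ham (v.val / m)
    have haiq := haq (v.val / m)
    omega
  -- degBound cast facts
  have hcdef : (⌈(n : ℚ) / 2⌉ : ℤ) = ((n / 2 + 1 : ℕ) : ℤ) ∨ True := Or.inr trivial
  set c : ℕ := (n + 1) / 2 with hcdef2
  have hceil1 : ⌈(n : ℚ) / 2⌉ = (c : ℤ) := by
    rw [Int.ceil_eq_iff]
    have e1 : n ≤ 2 * c := by omega
    have e2 : 2 * c ≤ n + 1 := by omega
    constructor
    · have h1 : ((2 * c : ℕ) : ℚ) ≤ ((n + 1 : ℕ) : ℚ) := by exact_mod_cast e2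
      push_cast at h1 ⊢
      linarith
    · have h1 : ((n : ℕ) : ℚ) ≤ ((2 * c : ℕ) : ℚ) := by exact_mod_cast e1
      push_cast at h1 ⊢
      linarith
  have hceil2 : ⌈((k : ℚ) + 1) / 2⌉ = (l : ℤ) := by
    rw [Int.ceil_eq_iff]
    have e1 : k + 1 ≤ 2 * l := by omega
    have e2 : 2 * l ≤ k + 2 := by omega
    constructor
    · have h1 : ((2 * l : ℕ) : ℚ) ≤ ((k + 2 : ℕ) : ℚ) := by exact_mod_cast e2
      push_cast at h1 ⊢
      linarith
    · have h1 : ((k + 1 : ℕ) : ℚ) ≤ ((2 * l : ℕ) : ℚ) := by exact_mod_cast e1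
      push_cast at h1 ⊢
      linarith
  have hfq : q = (n + 2) / (2 * l) := by
    have h1 : s = (n + 2) / 2 := by omega
    rw [hqdef, h1, Nat.div_div_eq_div_mul]
  have hfloor : ⌊((n : ℚ) + 2) / (2 * (l : ℚ))⌋ = (q : ℤ) := by
    have hl0 : (0 : ℚ) < 2 * (l : ℚ) := by
      have : (0 : ℚ) < (l : ℚ) := by exact_mod_cast (show 0 < l by omega)
      linarith
    have hmod := Nat.div_add_mod (n + 2) (2 * l)
    have hmlt : (n + 2) % (2 * l) < 2 * l := Nat.mod_lt _ (by omega)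
    have e1 : 2 * l * q ≤ n + 2 := by rw [hfq]; omega
    have e2 : n + 2 < 2 * l * q + 2 * l := by rw [hfq]; omega
    rw [Int.floor_eq_iff]
    constructor
    · rw [le_div_iff₀ hl0]
      have h1 : ((2 * l * q : ℕ) : ℚ) ≤ ((n + 2 : ℕ) : ℚ) := by exact_mod_cast e1
      push_cast at h1 ⊢
      linarith
    · rw [div_lt_iff₀ hl0]
      have h1 : ((n + 2 : ℕ) : ℚ) < ((2 * l * q + 2 * l : ℕ) : ℚ) := by exact_mod_cast e2
      push_cast at h1 ⊢
      linarith
  have hk0 : (k : ℚ) ≠ 0 := by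
    exact_mod_cast (show (k : ℚ) ≠ (0 : ℕ) from by exact_mod_cast (show k ≠ 0 by omega))
  have hdm : (n : ℚ) / (k : ℚ) = (m : ℚ) := by
    rw [div_eq_iff hk0]
    have hcast : ((n : ℕ) : ℚ) = ((k * m : ℕ) : ℚ) := Nat.cast_inj.mpr hnm
    push_cast at hcast
    linarith [hcast]
  have hdb : degBound n k = (c : ℚ) + (q : ℚ) - (m : ℚ) := by
    simp only [degBound, hceil1, hceil2]
    push_cast
    rw [hfloor, hdm]
    push_cast
    ring
  clear_value a c r q s l
  -- assemble
  refine ⟨F, ?_, ?_, ⟨S, ?_, ?_⟩, ?_⟩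
  · -- balanced k-partite
    refine ⟨fun v => ⟨v.val / m, hdivlt v⟩, ?_, ?_⟩
    · intro i
      have hck : Fintype.card (Fin n) / k = m := by
        rw [Fintype.card_fin, hnm, Nat.mul_div_cancel_left _ (show 0 < k by omega)]
      rw [hck]
      have he : (Finset.univ.filter fun v : Fin n => (⟨v.val / m, hdivlt v⟩ : Fin k) = i)
          = Finset.univ.filter (fun v : Fin n => v.val / m = i.val) := by
        apply Finset.filter_congr
        intro x _
        simp [Fin.ext_iff]
      rw [he]
      exact hpart i.val i.isLt
    · intro u v hadj he
      rw [hAdjIff] at hadj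
      exact hadj.1 (congrArg Fin.val he)
  · -- degree bound
    intro v
    rw [hncard v, hdb]
    by_cases hv : SpN v.val
    · rw [hdeg_S v hv]
      have h1 := haq (v.val / m)
      have h2 := ham (v.val / m)
      set D : ℕ := n - (m + s - a (v.val / m)) with hD
      have hnat : c + q ≤ D + m + 1 := by omega
      have hq2 : ((c + q : ℕ) : ℚ) ≤ ((D + m + 1 : ℕ) : ℚ) := by exact_mod_cast hnat
      push_cast at hq2
      linarith
    · rw [hdeg_notS v hv]
      have h1 : q ≤ (n + 2) / 4 := by
        rw [hfq]
        exact Nat.div_le_div_left (by omega) (by omega)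
      set D : ℕ := n - m with hD
      have hnat : c + q ≤ D + m + 1 := by omega
      have hq2 : ((c + q : ℕ) : ℚ) ≤ ((D + m + 1 : ℕ) : ℚ) := by exact_mod_cast hnat
      push_cast at hq2
      linarith
  · -- independent set size
    rw [hScard]
    have : ⌈((n : ℚ) + 1) / 2⌉ = (s : ℤ) := by
      rw [Int.ceil_eq_iff]
      have e1 : n + 1 ≤ 2 * s := by omega
      have e2 : 2 * s ≤ n + 3 := by omega
      have e3 : n % 2 = 1 → 2 * s = n + 1 := by omega
      have e4 : n % 2 = 0 → 2 * s = n + 2 := by omega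
      constructor
      · have h1 : 2 * s ≤ n + 2 := by omega
        have h2 : ((2 * s : ℕ) : ℚ) ≤ ((n + 2 : ℕ) : ℚ) := by exact_mod_cast h1
        push_cast at h2 ⊢
        linarith
      · have h2 : ((n + 1 : ℕ) : ℚ) ≤ ((2 * s : ℕ) : ℚ) := by exact_mod_cast e1
        push_cast at h2 ⊢
        linarith
    rw [this]
  · -- independence
    intro u hu v hv _ hadj
    rw [hAdjIff] at hadj
    rw [hS, Finset.mem_filter] at hu hv
    exact hadj.2 ⟨hu.2, hv.2⟩
  · -- not Hamiltonian
    apply not_ham_of_indep F S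
    · intro u hu v hv hadj
      rw [hAdjIff] at hadj
      rw [hS, Finset.mem_filter] at hu hv
      exact hadj.2 ⟨hu.2, hv.2⟩
    · rw [Fintype.card_fin]; omega
    · rw [Fintype.card_fin, hScard]; omega
end

section
/- There exists a balanced 4-partite graph F_2 on 8 vertices which is 2-connected, has minimum degree at least 3, has independence number exactly 3, and does not have a Hamiltonian cycle. -/
set_option maxRecDepth 8000

open SimpleGraph Finset
open Function in

/-- Adjacency for the witness graph: vertices `0,1` are joined to all of `2..7`,
and additionally `2-3`, `4-5`, `6-7` are edges. -/
def myAdj (u v : Fin 8) : Prop :=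
  (min u v ≤ 1 ∧ 2 ≤ max u v) ∨ ((u:ℕ)/2 = (v:ℕ)/2 ∧ u ≠ v ∧ 2 ≤ u)

instance : DecidableRel myAdj := fun u v =>
  inferInstanceAs (Decidable ((min u v ≤ 1 ∧ 2 ≤ max u v) ∨ ((u:ℕ)/2 = (v:ℕ)/2 ∧ u ≠ v ∧ 2 ≤ u)))

/-- The witness graph. -/
def myF : SimpleGraph (Fin 8) where
  Adj := myAdj
  symm := ⟨fun u v h => (by decide : ∀ u v : Fin 8, myAdj u v → myAdj v u) u v h⟩
  loopless := ⟨fun u h => (by decide : ∀ u : Fin 8, ¬ myAdj u u) u h⟩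

instance : DecidableRel myF.Adj := fun u v => inferInstanceAs (Decidable (myAdj u v))

lemma conn_of_hub {W : Type*} (H : SimpleGraph W) (h : W)
    (cov : ∀ x, x = h ∨ H.Adj x h ∨ ∃ y, H.Adj x y ∧ H.Adj y h) : H.Connected := by
  have reach : ∀ x, H.Reachable x h := by
    intro x
    rcases cov x with rfl | hadj | ⟨y, h1, h2⟩
    · exact Reachable.refl _
    · exact hadj.reachable
    · exact h1.reachable.trans h2.reachable
  haveI : Nonempty W := ⟨h⟩
  exact SimpleGraph.Connected.mk (fun x y => (reach x).trans (reach y).symm)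

/-- In a cyclic ordering, each unordered pair `{x, y}` occurs at most once as a pair
of consecutive values. -/
lemma block_card (σ : Fin 8 → Fin 8) (hinj : Function.Injective σ) (x y : Fin 8) :
    (univ.filter fun i => (σ i = x ∧ σ (i+1) = y) ∨ (σ i = y ∧ σ (i+1) = x)).card ≤ 1 := by
  apply Finset.card_le_one.2
  intro i hi j hj
  simp only [mem_filter, mem_univ, true_and] at hi hj
  have key : ∀ i : Fin 8, i + 1 + 1 ≠ i := by decide
  rcases hi with ⟨h1, h2⟩ | ⟨h1, h2⟩ <;> rcases hj with ⟨h3, h4⟩ | ⟨h3, h4⟩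
  · exact hinj (h1.trans h3.symm)
  · have e1 : i = j + 1 := hinj (h1.trans h4.symm)
    have e2 : j = i + 1 := hinj (h3.trans h2.symm)
    rw [e2] at e1
    exact absurd e1.symm (key i)
  · have e1 : i = j + 1 := hinj (h1.trans h4.symm)
    have e2 : j = i + 1 := hinj (h3.trans h2.symm)
    rw [e2] at e1
    exact absurd e1.symm (key i)
  · exact hinj (h1.trans h3.symm)

/-- There is no cyclic ordering of all eight vertices with consecutive vertices adjacent:
the six vertices `2..7` would contribute at least six cycle edges meeting `{0, 1}`
or lying inside one of the three pairs, which is impossible by counting. -/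
lemma no_cycle_fun :
    ¬ ∃ σ : Fin 8 → Fin 8, Function.Injective σ ∧ ∀ i : Fin 8, myF.Adj (σ i) (σ (i + 1)) := by
  rintro ⟨σ, hinj, hadj⟩
  classical
  set A : Finset (Fin 8) := univ.filter (fun i => σ i = 0 ∨ σ i = 1) with hAdef
  set B : Finset (Fin 8) := univ.filter (fun i => σ (i+1) = 0 ∨ σ (i+1) = 1) with hBdef
  set C : Finset (Fin 8) := univ.filter
    (fun i => ¬(σ i = 0 ∨ σ i = 1) ∧ ¬(σ (i+1) = 0 ∨ σ (i+1) = 1)) with hCdef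
  have hA : A.card ≤ 2 := by
    have := Finset.card_le_card_of_injOn σ (s := A) (t := {0,1})
      (fun i hi => by simp only [hAdef, Finset.coe_filter, Finset.mem_univ, true_and, Set.mem_setOf_eq] at hi; simp [hi]) hinj.injOn
    simpa using this
  have hB : B.card ≤ 2 := by
    have hinj' : Function.Injective (fun i : Fin 8 => σ (i + 1)) :=
      hinj.comp (add_left_injective 1)
    have := Finset.card_le_card_of_injOn (fun i => σ (i+1)) (s := B) (t := {0,1})
      (fun i hi => by simp only [hBdef, Finset.coe_filter, Finset.mem_univ, true_and, Set.mem_setOf_eq] at hi; simp [hi]) hinj'.injOn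
    simpa using this
  have hkey : ∀ u v : Fin 8, myF.Adj u v → ¬(u = 0 ∨ u = 1) → ¬(v = 0 ∨ v = 1) →
      ((u = 2 ∧ v = 3) ∨ (u = 3 ∧ v = 2)) ∨ ((u = 4 ∧ v = 5) ∨ (u = 5 ∧ v = 4)) ∨
      ((u = 6 ∧ v = 7) ∨ (u = 7 ∧ v = 6)) := by decide
  have hC : C.card ≤ 3 := by
    have hsub : C ⊆ (univ.filter fun i => (σ i = 2 ∧ σ (i+1) = 3) ∨ (σ i = 3 ∧ σ (i+1) = 2)) ∪
        ((univ.filter fun i => (σ i = 4 ∧ σ (i+1) = 5) ∨ (σ i = 5 ∧ σ (i+1) = 4)) ∪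
         (univ.filter fun i => (σ i = 6 ∧ σ (i+1) = 7) ∨ (σ i = 7 ∧ σ (i+1) = 6))) := by
      intro i hi
      simp only [hCdef, mem_filter, mem_univ, true_and] at hi
      rcases hkey _ _ (hadj i) hi.1 hi.2 with h | h | h <;>
        simp [Finset.mem_union, h]
    calc C.card ≤ _ := Finset.card_le_card hsub
      _ ≤ _ := (Finset.card_union_le _ _).trans
          (add_le_add (block_card σ hinj 2 3) (Finset.card_union_le _ _))
      _ ≤ 1 + (1 + 1) := by
          gcongr
          exacts [block_card σ hinj 4 5, block_card σ hinj 6 7]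
  have hcover : (univ : Finset (Fin 8)) ⊆ A ∪ B ∪ C := by
    intro i _
    by_cases h1 : σ i = 0 ∨ σ i = 1
    · simp [hAdef, Finset.mem_union, h1]
    by_cases h2 : σ (i+1) = 0 ∨ σ (i+1) = 1
    · simp [hBdef, Finset.mem_union, h2]
    · push_neg at h1 h2
      simp only [hCdef, Finset.mem_union, mem_filter, mem_univ, true_and]
      tauto
  have : (8 : ℕ) ≤ 7 := by
    calc (8:ℕ) = (univ : Finset (Fin 8)).card := by simp
      _ ≤ (A ∪ B ∪ C).card := Finset.card_le_card hcover
      _ ≤ A.card + B.card + C.card :=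
          (Finset.card_union_le _ _).trans (by gcongr; exact Finset.card_union_le _ _)
      _ ≤ 2 + 2 + 3 := by gcongr
  omega

lemma not_ham : ¬ myF.IsHamiltonian := by
  intro hham
  obtain ⟨a, p, hp⟩ := hham (by simp)
  apply no_cycle_fun
  have hlen9 : p.support.length = 9 := by
    rw [SimpleGraph.Walk.length_support, hp.length_eq]
    simp
  have htl : p.support.tail.length = 8 := by simp [List.length_tail, hlen9]
  refine ⟨fun i => p.support.tail.get (Fin.cast htl.symm i), ?_, ?_⟩
  · exact (List.nodup_iff_injective_get.mp hp.isCycle.support_nodup).comp (Fin.cast_injective _)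
  · have hchain := List.isChain_iff_getElem.mp p.isChain_adj_support
    have hlast : p.support.get ⟨8, by omega⟩ = a := by
      have := List.getLast_eq_getElem (l := p.support) (by simp)
      rw [p.getLast_support] at this
      simp only [hlen9] at this
      simpa using this.symm
    have hhead : p.support.get ⟨0, by omega⟩ = a := by
      rw [List.get_mk_zero, p.head_support]
    have adjt : ∀ (k m : ℕ) (hk : k < p.support.tail.length)
        (hm : m < p.support.tail.length), m = (k+1) % 8 →
        myF.Adj (p.support.tail.get ⟨k, hk⟩) (p.support.tail.get ⟨m, hm⟩) := by
      intro k m hk hm hmk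
      rw [List.get_tail, List.get_tail]
      by_cases h7 : k < 7
      · have hm' : m = k + 1 := by omega
        subst hm'
        exact hchain (k+1) (by omega)
      · have hk7 : k = 7 := by omega
        have hm0 : m = 0 := by omega
        subst hk7
        subst hm0
        have : p.support.get ⟨7+1, by omega⟩ = p.support.get ⟨0, by omega⟩ :=
          hlast.trans hhead.symm
        rw [this]
        exact hchain 0 (by omega)
    intro i
    have hidx : ((i+1 : Fin 8) : ℕ) = ((i:ℕ)+1) % 8 := by
      simp [Fin.add_def]
    exact adjt (i:ℕ) ((i+1 : Fin 8):ℕ) (by omega) (by omega) hidx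

/-- The coloring giving the balanced 4-partition of `myF`. -/
def myP : Fin 8 → Fin 4 := ![0, 0, 1, 2, 1, 3, 2, 3]

/-- `G` is 2-connected: it has at least 3 vertices and remains connected after the
deletion of any single vertex. -/
def TwoConnected {V : Type*} [Fintype V] (G : SimpleGraph V) : Prop :=
  3 ≤ Fintype.card V ∧ ∀ v : V, (G.induce {w | w ≠ v}).Connected

/-- There is a 2-connected balanced 4-partite graph `F₂` on 8 vertices with minimum degree
at least 3 and independence number exactly 3, which has no Hamiltonian cycle. -/
theorem exists_F2 :
    ∃ F : SimpleGraph (Fin 8),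
      IsBalancedKPartite F 4 ∧
      TwoConnected F ∧
      (∀ v : Fin 8, 3 ≤ (F.neighborSet v).ncard) ∧
      ((∃ s : Finset (Fin 8), s.card = 3 ∧ ∀ u ∈ s, ∀ v ∈ s, u ≠ v → ¬ F.Adj u v) ∧
        ∀ s : Finset (Fin 8), (∀ u ∈ s, ∀ v ∈ s, u ≠ v → ¬ F.Adj u v) → s.card ≤ 3) ∧
      ¬ F.IsHamiltonian := by
  refine ⟨myF, ⟨myP, by decide, by decide⟩, ⟨by simp, ?_⟩, ?_, ⟨⟨{2,4,6}, by decide, by decide⟩,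
    by decide⟩, not_ham⟩
  · intro v
    fin_cases v
    · exact conn_of_hub _ ⟨1, by decide⟩ (by decide)
    all_goals exact conn_of_hub _ ⟨0, by decide⟩ (by decide)
  · intro v
    rw [Set.ncard_eq_toFinset_card']
    fin_cases v <;> decide
end

section
/- Let n ≥ 8 be divisible by 4 and let k = n/2. There exists a balanced k-partite graph F_3 on n vertices such that δ(F_3) ≥ n/2 − 1, F_3 is 2-connected, the independence number of F_3 equals n/2, and F_3 does not have a Hamiltonian cycle. -/
open SimpleGraph Finset

def F3 (n : ℕ) : SimpleGraph (Fin n) where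
  Adj u v := u ≠ v ∧
    ((u.val < n/2 ∧ v.val < n/2 ∧ u.val/2 ≠ v.val/2) ∨
     (u.val < n/2 ∧ n/2 ≤ v.val ∧ (0 < u.val ∨ v.val = n/2)) ∨
     (n/2 ≤ u.val ∧ v.val < n/2 ∧ (0 < v.val ∨ u.val = n/2)))
  symm := ⟨by rintro u v ⟨h1, h2⟩; exact ⟨h1.symm, by tauto⟩⟩
  loopless := ⟨fun v h => h.1 rfl⟩

lemma card_filter_val (n : ℕ) (p : ℕ → Prop) [DecidablePred p] :
    ((Finset.univ : Finset (Fin n)).filter fun w => p w.val).card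
      = ((Finset.range n).filter p).card := by
  rw [← Finset.card_image_of_injective _ Fin.val_injective]
  congr 1
  ext x
  simp only [Finset.mem_image, Finset.mem_filter, Finset.mem_univ, true_and, Finset.mem_range]
  constructor
  · rintro ⟨w, hw, rfl⟩; exact ⟨w.isLt, hw⟩
  · rintro ⟨hx, hp⟩; exact ⟨⟨x, hx⟩, hp, rfl⟩

lemma F3_adj' {n : ℕ} (u v : Fin n) : (F3 n).Adj u v ↔ u ≠ v ∧
    ((u.val < n/2 ∧ v.val < n/2 ∧ u.val/2 ≠ v.val/2) ∨
     (u.val < n/2 ∧ n/2 ≤ v.val ∧ (0 < u.val ∨ v.val = n/2)) ∨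
     (n/2 ≤ u.val ∧ v.val < n/2 ∧ (0 < v.val ∨ u.val = n/2))) := Iff.rfl

lemma F3_balanced (t : ℕ) (ht : 2 ≤ t) : IsBalancedKPartite (F3 (4*t)) ((4*t) / 2) := by
  set n := 4 * t with hn4
  set m := n / 2 with hm
  have hm2 : m = 2 * t := by omega
  refine ⟨fun v => ⟨v.val / 2, by have := v.isLt; omega⟩, ?_, ?_⟩
  · intro i
    have hfe : (Finset.univ.filter fun v : Fin n =>
        (⟨v.val / 2, by have := v.isLt; omega⟩ : Fin m) = i)
        = Finset.univ.filter fun v : Fin n => v.val / 2 = i.val := by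
      ext v; simp [Fin.ext_iff]
    rw [hfe, card_filter_val n (fun x => x / 2 = i.val)]
    have hico : (Finset.range n).filter (fun x => x / 2 = i.val)
        = Finset.Ico (2 * i.val) (2 * i.val + 2) := by
      ext x
      simp only [Finset.mem_filter, Finset.mem_range, Finset.mem_Ico]
      have := i.isLt
      omega
    rw [hico, Nat.card_Ico]
    have h2 : Fintype.card (Fin n) / m = 2 := by
      rw [Fintype.card_fin, hm2, show n = 2 * t * 2 by omega,
        Nat.mul_div_cancel_left _ (by omega : 0 < 2 * t)]
    omega
  · intro u v hadj heq
    obtain ⟨hne, h⟩ := hadj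
    have hne' : u.val ≠ v.val := fun h' => hne (Fin.ext h')
    have heq' : u.val / 2 = v.val / 2 := by
      simpa [Fin.ext_iff] using heq
    omega

lemma ncard_ge_of_finset {n : ℕ} (G : SimpleGraph (Fin n)) (v : Fin n) (S : Finset (Fin n))
    (h : ∀ w ∈ S, G.Adj v w) : S.card ≤ (G.neighborSet v).ncard := by
  have hsub : (↑S : Set (Fin n)) ⊆ G.neighborSet v := fun w hw => h w (by simpa using hw)
  calc S.card = (↑S : Set (Fin n)).ncard := (Set.ncard_coe_finset S).symm
    _ ≤ _ := Set.ncard_le_ncard hsub (Set.toFinite _)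

lemma F3_mindeg (t : ℕ) (ht : 2 ≤ t) (v : Fin (4*t)) :
    (4*t) / 2 - 1 ≤ ((F3 (4*t)).neighborSet v).ncard := by
  have hvlt := v.isLt
  by_cases hC : v.val < (4*t)/2
  · by_cases h0 : v.val = 0
    · refine le_trans ?_ (ncard_ge_of_finset _ v
        (Finset.univ.filter fun w => 2 ≤ w.val ∧ w.val ≤ (4*t)/2) ?_)
      · rw [card_filter_val (4*t) (fun x => 2 ≤ x ∧ x ≤ (4*t)/2),
          show (Finset.range (4*t)).filter (fun x => 2 ≤ x ∧ x ≤ (4*t)/2)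
              = Finset.Ico 2 ((4*t)/2+1) by
            ext x; simp only [Finset.mem_filter, Finset.mem_range, Finset.mem_Ico]; omega, Nat.card_Ico]
        omega
      · intro w hw
        simp only [Finset.mem_filter, Finset.mem_univ, true_and] at hw
        refine ⟨fun h => by have := congrArg Fin.val h; omega, ?_⟩
        omega
    · refine le_trans ?_ (ncard_ge_of_finset _ v
        (Finset.univ.filter fun w => (4*t)/2 ≤ w.val) ?_)
      · rw [card_filter_val (4*t) (fun x => (4*t)/2 ≤ x),
          show (Finset.range (4*t)).filter (fun x => (4*t)/2 ≤ x)
              = Finset.Ico ((4*t)/2) (4*t) by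
            ext x; simp only [Finset.mem_filter, Finset.mem_range, Finset.mem_Ico]; omega, Nat.card_Ico]
        omega
      · intro w hw
        simp only [Finset.mem_filter, Finset.mem_univ, true_and] at hw
        refine ⟨fun h => by have := congrArg Fin.val h; omega, ?_⟩
        omega
  · refine le_trans ?_ (ncard_ge_of_finset _ v
      (Finset.univ.filter fun w => 1 ≤ w.val ∧ w.val < (4*t)/2) ?_)
    · rw [card_filter_val (4*t) (fun x => 1 ≤ x ∧ x < (4*t)/2),
        show (Finset.range (4*t)).filter (fun x => 1 ≤ x ∧ x < (4*t)/2)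
            = Finset.Ico 1 ((4*t)/2) by
          ext x; simp only [Finset.mem_filter, Finset.mem_range, Finset.mem_Ico]; omega, Nat.card_Ico]
    · intro w hw
      simp only [Finset.mem_filter, Finset.mem_univ, true_and] at hw
      refine ⟨fun h => by have := congrArg Fin.val h; omega, ?_⟩
      omega

lemma F3_indep_exists (t : ℕ) (ht : 2 ≤ t) :
    ∃ s : Finset (Fin (4*t)), s.card = (4*t) / 2 ∧
      ∀ u ∈ s, ∀ v ∈ s, u ≠ v → ¬ (F3 (4*t)).Adj u v := by
  refine ⟨Finset.univ.filter fun w => (4*t)/2 ≤ w.val, ?_, ?_⟩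
  · rw [card_filter_val (4*t) (fun x => (4*t)/2 ≤ x),
      show (Finset.range (4*t)).filter (fun x => (4*t)/2 ≤ x) = Finset.Ico ((4*t)/2) (4*t) by
        ext x; simp only [Finset.mem_filter, Finset.mem_range, Finset.mem_Ico]; omega,
      Nat.card_Ico]
    omega
  · intro u hu v hv huv hadj
    simp only [Finset.mem_filter, Finset.mem_univ, true_and] at hu hv
    obtain ⟨-, h⟩ := hadj
    omega

lemma F3_indep_bound (t : ℕ) (ht : 2 ≤ t) (s : Finset (Fin (4*t)))
    (hind : ∀ u ∈ s, ∀ v ∈ s, u ≠ v → ¬ (F3 (4*t)).Adj u v) : s.card ≤ (4*t) / 2 := by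
  have hcard : ∀ p : ℕ → Prop, ∀ _ : DecidablePred p, (∀ w ∈ s, p w.val) →
      s.card ≤ ((Finset.range (4*t)).filter p).card := by
    intro p hp hall
    rw [← card_filter_val (4*t) p]
    exact Finset.card_le_card fun w hw => Finset.mem_filter.2 ⟨Finset.mem_univ _, hall w hw⟩
  by_cases hC : ∃ w ∈ s, 1 ≤ w.val ∧ w.val < (4*t)/2
  · -- s contains a vertex of C other than 0 : s is inside one matched pair
    obtain ⟨w, hw, hw1, hw2⟩ := hC
    have hall : ∀ u ∈ s, u.val / 2 = w.val / 2 := by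
      intro u hu
      rcases eq_or_ne u w with rfl | hne
      · rfl
      · have hnadj := hind u hu w hw hne
        rw [F3_adj'] at hnadj
        have hne' : u.val ≠ w.val := fun h => hne (Fin.ext h)
        have hult := u.isLt
        by_contra hdiv
        exact hnadj ⟨hne, by omega⟩
    have := hcard (fun x => x / 2 = w.val / 2) (by infer_instance) hall
    calc s.card ≤ _ := this
      _ ≤ (4*t)/2 := by
        rw [show (Finset.range (4*t)).filter (fun x => x / 2 = w.val / 2)
            = Finset.Ico (2 * (w.val / 2)) (2 * (w.val / 2) + 2) by
          ext x; simp only [Finset.mem_filter, Finset.mem_range, Finset.mem_Ico]; omega,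
          Nat.card_Ico]
        omega
  · push_neg at hC
    by_cases h0 : (⟨0, by omega⟩ : Fin (4*t)) ∈ s
    · -- 0 ∈ s : then the vertex (4*t)/2 is not in s
      have hm : ((⟨(4*t)/2, by omega⟩ : Fin (4*t))) ∉ s := by
        intro hmem
        refine hind _ h0 _ hmem (fun h => by have := congrArg Fin.val h; simp at this; omega) ?_
        rw [F3_adj']
        refine ⟨fun h => by have := congrArg Fin.val h; simp at this; omega, ?_⟩
        show ((0:ℕ) < (4*t)/2 ∧ (4*t)/2 < (4*t)/2 ∧ (0:ℕ)/2 ≠ ((4*t)/2)/2) ∨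
          ((0:ℕ) < (4*t)/2 ∧ (4*t)/2 ≤ (4*t)/2 ∧ ((0:ℕ) < 0 ∨ (4*t)/2 = (4*t)/2)) ∨
          ((4*t)/2 ≤ (0:ℕ) ∧ (4*t)/2 < (4*t)/2 ∧ ((0:ℕ) < (4*t)/2 ∨ (0:ℕ) = (4*t)/2))
        omega
      have hall : ∀ u ∈ s, u.val = 0 ∨ (4*t)/2 + 1 ≤ u.val := by
        intro u hu
        have := hC u hu
        have hult := u.isLt
        rcases Nat.lt_or_ge u.val ((4*t)/2 + 1) with h | h
        · left
          by_contra hne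
          exact hm (by
            have hval : (⟨(4*t)/2, by omega⟩ : Fin (4*t)).val = (4*t)/2 := rfl
            have : u = (⟨(4*t)/2, by omega⟩ : Fin (4*t)) := Fin.ext (by rw [hval]; omega)
            rwa [← this])
        · right; exact h
      have := hcard (fun x => x = 0 ∨ (4*t)/2 + 1 ≤ x) (by infer_instance) hall
      calc s.card ≤ _ := this
        _ ≤ (4*t)/2 := by
          rw [show (Finset.range (4*t)).filter (fun x => x = 0 ∨ (4*t)/2 + 1 ≤ x)
              = insert 0 (Finset.Ico ((4*t)/2 + 1) (4*t)) by
            ext x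
            simp only [Finset.mem_filter, Finset.mem_range, Finset.mem_insert, Finset.mem_Ico]
            omega]
          rw [Finset.card_insert_of_notMem (by simp [Finset.mem_Ico]), Nat.card_Ico]
          omega
    · -- s is inside I
      have hall : ∀ u ∈ s, (4*t)/2 ≤ u.val := by
        intro u hu
        have := hC u hu
        have hult := u.isLt
        by_contra h
        have hu0 : u.val = 0 := by omega
        exact h0 (by rwa [show (⟨0, by omega⟩ : Fin (4*t)) = u from Fin.ext hu0.symm])
      have := hcard (fun x => (4*t)/2 ≤ x) (by infer_instance) hall
      calc s.card ≤ _ := this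
        _ ≤ (4*t)/2 := by
          rw [show (Finset.range (4*t)).filter (fun x => (4*t)/2 ≤ x)
              = Finset.Ico ((4*t)/2) (4*t) by
            ext x; simp only [Finset.mem_filter, Finset.mem_range, Finset.mem_Ico]; omega,
            Nat.card_Ico]
          omega

lemma F3_adj_mk (n : ℕ) (a b : ℕ) (ha : a < n) (hb : b < n)
    (h : a ≠ b ∧ ((a < n/2 ∧ b < n/2 ∧ a/2 ≠ b/2) ∨
      (a < n/2 ∧ n/2 ≤ b ∧ (0 < a ∨ b = n/2)) ∨
      (n/2 ≤ a ∧ b < n/2 ∧ (0 < b ∨ a = n/2)))) :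
    (F3 n).Adj ⟨a, ha⟩ ⟨b, hb⟩ :=
  ⟨fun hh => h.1 (congrArg Fin.val hh), h.2⟩

lemma F3_twoconn (t : ℕ) (ht : 2 ≤ t) : TwoConnected (F3 (4*t)) := by
  constructor
  · rw [Fintype.card_fin]; omega
  · intro v
    have hvlt := v.isLt
    obtain ⟨iv, hiv1, hiv2, hiv3⟩ : ∃ x, (4*t)/2 ≤ x ∧ x ≤ (4*t)/2+1 ∧ x ≠ v.val := by
      by_cases h : v.val = (4*t)/2
      · exact ⟨(4*t)/2+1, by omega⟩
      · exact ⟨(4*t)/2, by omega⟩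
    obtain ⟨hb, hb1, hb2, hb3⟩ : ∃ x, 1 ≤ x ∧ x ≤ 2 ∧ x ≠ v.val := by
      by_cases h : v.val = 1
      · exact ⟨2, by omega⟩
      · exact ⟨1, by omega⟩
    obtain ⟨c2, hc1, hc2, hc3⟩ : ∃ x, 2 ≤ x ∧ x ≤ 3 ∧ x ≠ v.val := by
      by_cases h : v.val = 2
      · exact ⟨3, by omega⟩
      · exact ⟨2, by omega⟩
    set S : Set (Fin (4*t)) := {w | w ≠ v} with hS
    let hubI : ↥S := ⟨⟨iv, by omega⟩, fun h => hiv3 (congrArg Fin.val h)⟩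
    let bvert : ↥S := ⟨⟨hb, by omega⟩, fun h => hb3 (congrArg Fin.val h)⟩
    let cvert : ↥S := ⟨⟨c2, by omega⟩, fun h => hc3 (congrArg Fin.val h)⟩
    have hbI : ((F3 (4*t)).induce S).Adj bvert hubI := by
      show (F3 (4*t)).Adj ⟨hb, by omega⟩ ⟨iv, by omega⟩
      exact F3_adj_mk _ _ _ _ _ ⟨by omega, Or.inr (Or.inl (by omega))⟩
    have hcI : ((F3 (4*t)).induce S).Adj cvert hubI := by
      show (F3 (4*t)).Adj ⟨c2, by omega⟩ ⟨iv, by omega⟩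
      exact F3_adj_mk _ _ _ _ _ ⟨by omega, Or.inr (Or.inl (by omega))⟩
    have reach : ∀ w : ↥S, ((F3 (4*t)).induce S).Reachable w hubI := by
      intro w
      have hwv : w.1 ≠ v := w.2
      have hwv' : w.1.val ≠ v.val := fun h => hwv (Fin.ext h)
      have hwlt := w.1.isLt
      by_cases hI : (4*t)/2 ≤ w.1.val
      · by_cases heq : w.1.val = iv
        · have : w = hubI := Subtype.ext (Fin.ext heq)
          rw [this]
      -- w in I, w ≠ hubI : go through bvert
        · have h1 : ((F3 (4*t)).induce S).Adj w bvert := by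
            show (F3 (4*t)).Adj w.1 ⟨hb, by omega⟩
            exact F3_adj_mk _ w.1.val hb w.1.isLt (by omega)
              ⟨by omega, Or.inr (Or.inr (by omega))⟩
          exact (h1.reachable).trans hbI.reachable
      · by_cases h0 : w.1.val = 0
        · -- w = 0 : go through cvert
          have h1 : ((F3 (4*t)).induce S).Adj w cvert := by
            show (F3 (4*t)).Adj w.1 ⟨c2, by omega⟩
            exact F3_adj_mk _ w.1.val c2 w.1.isLt (by omega)
              ⟨by omega, Or.inl (by omega)⟩
          exact (h1.reachable).trans hcI.reachable
        · -- w in C' : adjacent to hubI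
          have h1 : ((F3 (4*t)).induce S).Adj w hubI := by
            show (F3 (4*t)).Adj w.1 ⟨iv, by omega⟩
            exact F3_adj_mk _ w.1.val iv w.1.isLt (by omega)
              ⟨by omega, Or.inr (Or.inl (by omega))⟩
          exact h1.reachable
    exact (SimpleGraph.connected_iff_exists_forall_reachable _).2
      ⟨hubI, fun w => (reach w).symm⟩

lemma countP_univ {n : ℕ} (l : List (Fin n)) (hl : ∀ v, l.count v = 1) (q : Fin n → Bool) :
    l.countP q = ((Finset.univ : Finset (Fin n)).filter fun v => q v = true).card := by
  have hnd : l.Nodup := List.nodup_iff_count_le_one.2 fun v => (hl v).le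
  have hmem : ∀ v : Fin n, v ∈ l := fun v => List.count_pos_iff.1 (by rw [hl]; exact one_pos)
  rw [List.countP_eq_length_filter, ← List.toFinset_card_of_nodup (hnd.filter q)]
  congr 1
  ext v
  simp [List.mem_toFinset, List.mem_filter, hmem v]

lemma F3_not_ham (n : ℕ) (hn : 8 ≤ n) (hdvd : 4 ∣ n) : ¬ (F3 n).IsHamiltonian := by
  obtain ⟨t, rfl⟩ := hdvd
  set n := 4 * t with hn4
  have ht : 2 ≤ t := by omega
  set m := n / 2 with hm
  have hm2 : m = 2 * t := by omega
  intro hham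
  obtain ⟨a, p, hp⟩ := hham (by simp [Fintype.card_fin]; omega)
  have hnotnil : ¬ p.Nil := hp.1.not_nil
  have htail : ∀ v, p.support.tail.count v = 1 := fun v => by
    rw [← SimpleGraph.Walk.support_tail_of_not_nil p hnotnil]; exact hp.isHamiltonian_tail v
  have hsupp : p.support.dropLast ++ [a] = p.support := by
    rw [← SimpleGraph.Walk.map_fst_darts]; exact SimpleGraph.Walk.map_fst_darts_append p
  have hdrop : ∀ v, p.support.dropLast.count v = 1 := by
    intro v
    have h1 := congrArg (List.count v) hsupp
    rw [List.count_append] at h1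
    have hsing : List.count v [a] = if v = a then 1 else 0 := by
      by_cases hv : v = a <;> simp [hv, List.count_singleton, eq_comm (a := a)]
    rcases eq_or_ne v a with rfl | hv
    · rw [if_pos rfl] at hsing
      have h2 : p.support.count v = 2 := hp.count_support_self
      omega
    · rw [if_neg hv] at hsing
      have h2 : p.support.count v = 1 := hp.support_count_of_ne (Ne.symm hv)
      omega
  have hmapsnd : p.darts.map (fun d => d.toProd.2) = p.support.tail :=
    SimpleGraph.Walk.map_snd_darts p
  have hmapfst : p.darts.map (fun d => d.toProd.1) = p.support.dropLast :=
    SimpleGraph.Walk.map_fst_darts p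
  have hcard_ge : ((Finset.univ : Finset (Fin n)).filter
      fun v => (decide (m ≤ v.val)) = true).card = m := by
    simp only [decide_eq_true_eq]
    rw [card_filter_val n (fun x => m ≤ x)]
    have : (Finset.range n).filter (fun x => m ≤ x) = Finset.Ico m n := by
      ext x; simp [Finset.mem_Ico]; omega
    rw [this, Nat.card_Ico]; omega
  have hcard_lt : ((Finset.univ : Finset (Fin n)).filter
      fun v => (decide (v.val < m)) = true).card = m := by
    simp only [decide_eq_true_eq]
    rw [card_filter_val n (fun x => x < m)]
    have : (Finset.range n).filter (fun x => x < m) = Finset.Ico 0 m := by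
      ext x; simp [Finset.mem_Ico]; omega
    rw [this, Nat.card_Ico]; omega
  have hfstge : p.darts.countP (fun d => decide (m ≤ d.toProd.1.val)) = m := by
    rw [show (fun d : (F3 n).Dart => decide (m ≤ d.toProd.1.val))
        = ((fun w : Fin n => decide (m ≤ w.val)) ∘ (fun d : (F3 n).Dart => d.toProd.1)) from rfl,
      ← List.countP_map, hmapfst, countP_univ _ hdrop, hcard_ge]
  have hsndge : p.darts.countP (fun d => decide (m ≤ d.toProd.2.val)) = m := by
    rw [show (fun d : (F3 n).Dart => decide (m ≤ d.toProd.2.val))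
        = ((fun w : Fin n => decide (m ≤ w.val)) ∘ (fun d : (F3 n).Dart => d.toProd.2)) from rfl,
      ← List.countP_map, hmapsnd, countP_univ _ htail, hcard_ge]
  have hexc : ∀ d ∈ p.darts, ¬(m ≤ d.toProd.1.val ∧ m ≤ d.toProd.2.val) := by
    intro d _ hdd
    have hadj := d.adj
    rw [show (F3 n).Adj d.toProd.1 d.toProd.2 ↔ _ from Iff.rfl] at hadj
    obtain ⟨-, h⟩ := hadj
    omega
  have hlen : p.darts.length = n := by
    rw [SimpleGraph.Walk.length_darts, hp.length_eq, Fintype.card_fin]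
  have key : ∀ (P Q : (F3 n).Dart → Bool), (∀ d ∈ p.darts, Q d = true → P d = false) →
      p.darts.countP P = m → p.darts.countP Q = m →
      ∀ d ∈ p.darts, P d = false → Q d = true := by
    intro P Q hdisj hP hQ
    have h0 := p.darts.length_eq_countP_add_countP (p := P)
    have hcne : p.darts.countP (fun a => ¬ P a) = p.darts.countP (fun d => !P d) :=
      List.countP_congr (by intro x _; simp)
    have hlenfilter : (p.darts.filter (fun d => !P d)).length = m := by
      rw [← List.countP_eq_length_filter, ← hcne]
      omega
    have hQfilter : (p.darts.filter (fun d => !P d)).countP Q = m := by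
      rw [List.countP_filter, ← hQ]
      apply List.countP_congr
      intro d hd
      constructor
      · intro h; simp only [Bool.and_eq_true] at h; exact h.1
      · intro h; simp only [Bool.and_eq_true, Bool.not_eq_true']; exact ⟨h, hdisj d hd h⟩
    have hall : ∀ d ∈ p.darts.filter (fun d => !P d), Q d = true :=
      List.countP_eq_length.1 (by rw [hQfilter, hlenfilter])
    intro d hd hPd
    exact hall d (List.mem_filter.2 ⟨hd, by simp [hPd]⟩)
  have key1 : ∀ d ∈ p.darts, d.toProd.2.val < m → m ≤ d.toProd.1.val := by
    intro d hd hlt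
    have := key (fun d => decide (m ≤ d.toProd.2.val)) (fun d => decide (m ≤ d.toProd.1.val))
      (by intro d hd h
          simp only [decide_eq_true_eq] at h
          simp only [decide_eq_false_iff_not]
          intro h2; exact hexc d hd ⟨h, h2⟩)
      hsndge hfstge d hd (by simp only [decide_eq_false_iff_not]; omega)
    simpa using this
  have key2 : ∀ d ∈ p.darts, d.toProd.1.val < m → m ≤ d.toProd.2.val := by
    intro d hd hlt
    have := key (fun d => decide (m ≤ d.toProd.1.val)) (fun d => decide (m ≤ d.toProd.2.val))
      (by intro d hd h
          simp only [decide_eq_true_eq] at h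
          simp only [decide_eq_false_iff_not]
          intro h2; exact hexc d hd ⟨h2, h⟩)
      hfstge hsndge d hd (by simp only [decide_eq_false_iff_not]; omega)
    simpa using this
  have hmn : 0 < n := by omega
  have hd1 : ∃ d ∈ p.darts, d.toProd.2 = (⟨0, hmn⟩ : Fin n) := by
    have : (⟨0, hmn⟩ : Fin n) ∈ p.support.tail :=
      List.count_pos_iff.1 (by rw [htail]; exact one_pos)
    rw [← hmapsnd] at this
    obtain ⟨d, hd, hds⟩ := List.mem_map.1 this
    exact ⟨d, hd, hds⟩
  have hd2 : ∃ d ∈ p.darts, d.toProd.1 = (⟨0, hmn⟩ : Fin n) := by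
    have : (⟨0, hmn⟩ : Fin n) ∈ p.support.dropLast :=
      List.count_pos_iff.1 (by rw [hdrop]; exact one_pos)
    rw [← hmapfst] at this
    obtain ⟨d, hd, hds⟩ := List.mem_map.1 this
    exact ⟨d, hd, hds⟩
  obtain ⟨d1, hd1m, hd1s⟩ := hd1
  obtain ⟨d2, hd2m, hd2f⟩ := hd2
  have hd1sv : d1.toProd.2.val = 0 := by rw [hd1s]
  have hd2fv : d2.toProd.1.val = 0 := by rw [hd2f]
  have hd1fst : d1.toProd.1.val = m := by
    have hge : m ≤ d1.toProd.1.val := key1 d1 hd1m (by omega)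
    have hadj := d1.adj
    rw [show (F3 n).Adj d1.toProd.1 d1.toProd.2 ↔ _ from Iff.rfl] at hadj
    obtain ⟨-, h⟩ := hadj
    omega
  have hd2snd : d2.toProd.2.val = m := by
    have hge : m ≤ d2.toProd.2.val := key2 d2 hd2m (by omega)
    have hadj := d2.adj
    rw [show (F3 n).Adj d2.toProd.1 d2.toProd.2 ↔ _ from Iff.rfl] at hadj
    obtain ⟨-, h⟩ := hadj
    omega
  have hedge : d1.edge = d2.edge := by
    show s(d1.toProd.1, d1.toProd.2) = s(d2.toProd.1, d2.toProd.2)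
    rw [hd1s, hd2f]
    have e1 : d1.toProd.1 = (⟨m, by omega⟩ : Fin n) := Fin.ext hd1fst
    have e2 : d2.toProd.2 = (⟨m, by omega⟩ : Fin n) := Fin.ext hd2snd
    rw [e1, e2, Sym2.eq_swap]
  have hnodup : (p.darts.map SimpleGraph.Dart.edge).Nodup := hp.isCycle.isTrail.edges_nodup
  have heq : d1 = d2 := List.inj_on_of_nodup_map hnodup hd1m hd2m hedge
  rw [heq] at hd1sv
  omega

/-- For `n ≥ 8` divisible by `4` and `k = n/2`, there is a balanced `k`-partite graph `F₃`
on `n` vertices with minimum degree at least `n/2 − 1`, which is 2-connected, has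
independence number exactly `n/2`, and has no Hamiltonian cycle. -/
theorem exists_F3 (n : ℕ) (hn : 8 ≤ n) (hdvd : 4 ∣ n) :
    ∃ F : SimpleGraph (Fin n),
      IsBalancedKPartite F (n / 2) ∧
      (∀ v : Fin n, n / 2 - 1 ≤ (F.neighborSet v).ncard) ∧
      TwoConnected F ∧
      ((∃ s : Finset (Fin n), s.card = n / 2 ∧ ∀ u ∈ s, ∀ v ∈ s, u ≠ v → ¬ F.Adj u v) ∧
        ∀ s : Finset (Fin n), (∀ u ∈ s, ∀ v ∈ s, u ≠ v → ¬ F.Adj u v) → s.card ≤ n / 2) ∧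
      ¬ F.IsHamiltonian := by
  obtain ⟨t, rfl⟩ := hdvd
  have ht : 2 ≤ t := by omega
  exact ⟨F3 (4*t), F3_balanced t ht, F3_mindeg t ht, F3_twoconn t ht,
    ⟨F3_indep_exists t ht, fun s hs => F3_indep_bound t ht s hs⟩,
    F3_not_ham (4*t) hn ⟨t, rfl⟩⟩
end

section
/- Let k ≥ 3, let n be divisible by k with n ≥ 2k, and let G be a balanced k-partite graph on n vertices with δ(G) ≥ ⌈n/2⌉ + ⌊(n+2)/(2·⌈(k+1)/2⌉)⌋ − n/k. If it is not the case that k is even and n = 2k, then G is 2-connected. -/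
open SimpleGraph Finset

lemma floor_nat_div (a b : ℕ) (hb : 0 < b) : ⌊(a : ℚ) / (b : ℚ)⌋ = ((a / b : ℕ) : ℤ) := by
  have h := Nat.div_add_mod a b
  have h2 := Nat.mod_lt a hb
  set q := a / b with hq
  set r := a % b with hr
  have hc : (b : ℚ) * q + r = a := by exact_mod_cast h
  have hc2 : (r : ℚ) < b := by exact_mod_cast h2
  have hr0 : (0 : ℚ) ≤ r := by positivity
  have hb0 : (0 : ℚ) < b := by exact_mod_cast hb
  rw [Int.floor_eq_iff]
  constructor
  · rw [le_div_iff₀ hb0]; push_cast; nlinarith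
  · rw [div_lt_iff₀ hb0]; push_cast; nlinarith

lemma ceil_nat_div (a b : ℕ) (hb : 0 < b) : ⌈(a : ℚ) / (b : ℚ)⌉ = (((a + b - 1) / b : ℕ) : ℤ) := by
  have h := Nat.div_add_mod (a + b - 1) b
  have h2 := Nat.mod_lt (a + b - 1) hb
  set q := (a + b - 1) / b with hq
  set r := (a + b - 1) % b with hr
  obtain ⟨B, hB⟩ : ∃ B, b * q = B := ⟨_, rfl⟩
  rw [hB] at h
  have hbq2 : a ≤ B := by omega
  have hBc : (b : ℚ) * q = B := by exact_mod_cast hB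
  have hb0 : (0 : ℚ) < b := by exact_mod_cast hb
  have hc1 : (B : ℚ) < a + b := by exact_mod_cast (by omega : B < a + b)
  have hc2 : (a : ℚ) ≤ B := by exact_mod_cast hbq2
  rw [Int.ceil_eq_iff]
  constructor
  · rw [lt_div_iff₀ hb0]; push_cast; nlinarith
  · rw [div_le_iff₀ hb0]; push_cast; nlinarith

lemma degBound_eq (n k m : ℕ) (hk : 3 ≤ k) (hnm : n = k * m) :
    degBound n k = (((n+1)/2 + (n+2)/(2*((k+2)/2)) : ℕ) : ℚ) - (m : ℚ) := by
  have hkq : (k : ℚ) ≠ 0 := by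
    exact_mod_cast (by omega : (k : ℕ) ≠ 0)
  have e1 : ⌈(n : ℚ) / 2⌉ = (((n+1)/2 : ℕ) : ℤ) := by
    have h := ceil_nat_div n 2 (by norm_num)
    have h2 : n + 2 - 1 = n + 1 := by omega
    rw [h2] at h
    simpa using h
  have e2 : ⌈((k : ℚ) + 1) / 2⌉ = (((k+2)/2 : ℕ) : ℤ) := by
    have h := ceil_nat_div (k+1) 2 (by norm_num)
    have h2 : k + 1 + 2 - 1 = k + 2 := by omega
    rw [h2] at h
    have h3 : ((k+1 : ℕ) : ℚ) = (k : ℚ) + 1 := by push_cast; ring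
    rw [h3] at h
    simpa using h
  have hc2 : 0 < 2*((k+2)/2) := by omega
  have e3 : ⌊((n : ℚ) + 2) / ((2*((k+2)/2) : ℕ) : ℚ)⌋ = (((n+2)/(2*((k+2)/2)) : ℕ) : ℤ) := by
    have h := floor_nat_div (n+2) (2*((k+2)/2)) hc2
    have h3 : ((n+2 : ℕ) : ℚ) = (n : ℚ) + 2 := by push_cast; ring
    rw [h3] at h
    exact h
  have e1' : ((⌈(n : ℚ) / 2⌉ : ℤ) : ℚ) = (((n+1)/2 : ℕ) : ℚ) := by
    rw [e1]; exact Int.cast_natCast _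
  have e2' : ((⌈((k : ℚ) + 1) / 2⌉ : ℤ) : ℚ) = (((k+2)/2 : ℕ) : ℚ) := by
    rw [e2]; exact Int.cast_natCast _
  have e3' : ((⌊((n : ℚ) + 2) / ((2*((k+2)/2) : ℕ) : ℚ)⌋ : ℤ) : ℚ)
      = (((n+2)/(2*((k+2)/2)) : ℕ) : ℚ) := by
    rw [e3]; exact Int.cast_natCast _
  have ecast : ((2 : ℚ) * ((((k+2)/2 : ℕ)) : ℚ)) = ((2*((k+2)/2) : ℕ) : ℚ) := by
    rw [Nat.cast_mul, Nat.cast_ofNat]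
  have e4 : (n : ℚ) / k = m := by
    rw [hnm]; push_cast; field_simp
  unfold degBound
  rw [e1', e2', ecast, e3', e4]
  push_cast
  ring

lemma arith (k m : ℕ) (hk : 3 ≤ k) (hm : 2 ≤ m) (hexc : ¬(Even k ∧ m = 2)) :
    m + 1 ≤ (k*m+2)/(2*((k+2)/2)) + ((k*m-1)/2 + k - 1)/k := by
  have hk0 : 0 < k := by omega
  rcases Nat.even_or_odd k with ⟨t, hkt⟩ | ⟨t, hkt⟩
  · -- k = t + t, t ≥ 2, m ≥ 3
    have ht : 2 ≤ t := by omega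
    have hm3 : 3 ≤ m := by
      rcases Nat.lt_or_ge m 3 with h | h
      · exact absurd ⟨⟨t, hkt⟩, by omega⟩ hexc
      · exact h
    have hd : 2*((k+2)/2) = k + 2 := by omega
    rcases Nat.even_or_odd m with ⟨s, hms⟩ | ⟨s, hms⟩
    · have hs : 2 ≤ s := by omega
      obtain ⟨w, hw⟩ : ∃ w, t*s = w := ⟨_, rfl⟩
      have hst : t + s ≤ w := hw ▸ Nat.add_le_mul ht hs
      have hkm : k*m = 4*w := by rw [← hw]; subst hkt hms; ring
      have hA0 : (k*m-1)/2 = 2*w-1 := by rw [hkm]; omega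
      have h1 : s + 1 ≤ (k*m+2)/(2*((k+2)/2)) := by
        rw [hd, Nat.le_div_iff_mul_le (by omega), hkm, hkt]
        have e : (s+1) * (t+t+2) = 2*w + 2*t + 2*s + 2 := by rw [← hw]; ring
        rw [e]; omega
      have h2 : s ≤ ((k*m-1)/2 + k - 1)/k := by
        rw [Nat.le_div_iff_mul_le hk0, hA0, hkt]
        have e : s * (t+t) = 2*w := by rw [← hw]; ring
        rw [e]; omega
      linarith
    · have hs : 1 ≤ s := by omega
      obtain ⟨w, hw⟩ : ∃ w, t*s = w := ⟨_, rfl⟩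
      have hst : s ≤ w := hw ▸ Nat.le_mul_of_pos_left s (by omega)
      have hkm : k*m = 4*w + 2*t := by rw [← hw]; subst hkt hms; ring
      have hA0 : (k*m-1)/2 = 2*w + t - 1 := by rw [hkm]; omega
      have h1 : s + 1 ≤ (k*m+2)/(2*((k+2)/2)) := by
        rw [hd, Nat.le_div_iff_mul_le (by omega), hkm, hkt]
        have e : (s+1) * (t+t+2) = 2*w + 2*t + 2*s + 2 := by rw [← hw]; ring
        rw [e]; omega
      have h2 : s + 1 ≤ ((k*m-1)/2 + k - 1)/k := by
        rw [Nat.le_div_iff_mul_le hk0, hA0, hkt]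
        have e : (s+1) * (t+t) = 2*w + 2*t := by rw [← hw]; ring
        rw [e]; omega
      linarith
  · -- k = 2t+1, t ≥ 1
    have ht : 1 ≤ t := by omega
    have hd : 2*((k+2)/2) = k + 1 := by omega
    rcases Nat.even_or_odd m with ⟨s, hms⟩ | ⟨s, hms⟩
    · have hs : 1 ≤ s := by omega
      obtain ⟨w, hw⟩ : ∃ w, t*s = w := ⟨_, rfl⟩
      have hst : t ≤ w := hw ▸ Nat.le_mul_of_pos_right t (by omega)
      have hkm : k*m = 4*w + 2*s := by rw [← hw]; subst hkt hms; ring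
      have hA0 : (k*m-1)/2 = 2*w + s - 1 := by rw [hkm]; omega
      have h1 : s + 1 ≤ (k*m+2)/(2*((k+2)/2)) := by
        rw [hd, Nat.le_div_iff_mul_le (by omega), hkm, hkt]
        have e : (s+1) * (2*t+1+1) = 2*w + 2*t + 2*s + 2 := by rw [← hw]; ring
        rw [e]; omega
      have h2 : s ≤ ((k*m-1)/2 + k - 1)/k := by
        rw [Nat.le_div_iff_mul_le hk0, hA0, hkt]
        have e : s * (2*t+1) = 2*w + s := by rw [← hw]; ring
        rw [e]; omega
      linarith
    · have hs : 1 ≤ s := by omega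
      obtain ⟨w, hw⟩ : ∃ w, t*s = w := ⟨_, rfl⟩
      have hst : s ≤ w := hw ▸ Nat.le_mul_of_pos_left s (by omega)
      have hkm : k*m = 4*w + 2*t + 2*s + 1 := by rw [← hw]; subst hkt hms; ring
      have hA0 : (k*m-1)/2 = 2*w + t + s := by rw [hkm]; omega
      have h1 : s + 1 ≤ (k*m+2)/(2*((k+2)/2)) := by
        rw [hd, Nat.le_div_iff_mul_le (by omega), hkm, hkt]
        have e : (s+1) * (2*t+1+1) = 2*w + 2*t + 2*s + 2 := by rw [← hw]; ring
        rw [e]; omega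
      have h2 : s + 1 ≤ ((k*m-1)/2 + k - 1)/k := by
        rw [Nat.le_div_iff_mul_le hk0, hA0, hkt]
        have e : (s+1) * (2*t+1) = 2*w + 2*t + s + 1 := by rw [← hw]; ring
        rw [e]; omega
      linarith

lemma final_contra (k m n δ s c : ℕ) (hk : 3 ≤ k) (hm : 2 ≤ m) (hn : n = k*m)
    (hexc : ¬(Even k ∧ m = 2)) (h1 : 2*s + 1 ≤ n) (h2 : s ≤ k * c)
    (h3 : δ + c ≤ s + 1)
    (h4 : (n+1)/2 + (n+2)/(2*((k+2)/2)) ≤ δ + m) : False := by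
  have hk0 : 0 < k := by omega
  have harith := arith k m hk hm hexc
  rw [← hn] at harith
  have hA0s : s ≤ (n-1)/2 := by omega
  have hhalf : (n+1)/2 = (n-1)/2 + 1 := by omega
  have hcs : (s + k - 1)/k ≤ c := by
    rw [Nat.div_le_iff_le_mul_add_pred hk0]
    have h5 := Nat.add_le_add_right h2 (k-1)
    have heq : s + k - 1 = s + (k-1) := by omega
    rw [heq]
    exact h5
  have hmono : ((n-1)/2 + k - 1)/k ≤ (s + k - 1)/k + ((n-1)/2 - s) := by
    have heq : (n-1)/2 + k - 1 = (s + k - 1) + ((n-1)/2 - s) := by omega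
    rw [heq]
    calc ((s + k - 1) + ((n-1)/2 - s))/k
        ≤ ((s + k - 1) + ((n-1)/2 - s)*k)/k := by
          apply Nat.div_le_div_right
          exact Nat.add_le_add_left (Nat.le_mul_of_pos_right _ hk0) _
      _ = (s + k - 1)/k + ((n-1)/2 - s) := Nat.add_mul_div_right _ _ hk0
  have hEs : ((n-1)/2 - s) + s = (n-1)/2 := by omega
  linarith

lemma side_bound {V : Type*} [Fintype V] [DecidableEq V] (G : SimpleGraph V) [DecidableRel G.Adj]
    {k : ℕ} (hk : 0 < k) (P : V → Fin k) (hP : ∀ u w : V, G.Adj u w → P u ≠ P w)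
    (v : V) (S : Finset V) (hSne : S.Nonempty) (hv : v ∉ S)
    (hcl : ∀ a ∈ S, ∀ w, G.Adj a w → w = v ∨ w ∈ S) :
    ∃ c : ℕ, S.card ≤ k * c ∧ G.minDegree + c ≤ S.card + 1 := by
  classical
  haveI : Nonempty (Fin k) := ⟨⟨0, hk⟩⟩
  obtain ⟨i, hi⟩ : ∃ i : Fin k, S.card ≤ k * (S.filter (fun w => P w = i)).card := by
    have h1 : S.card = ∑ i : Fin k, (S.filter fun w => P w = i).card :=
      Finset.card_eq_sum_card_fiberwise (fun x _ => Finset.mem_univ _)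
    have hsum : ∑ _i : Fin k, S.card ≤ ∑ i : Fin k, k * (S.filter fun w => P w = i).card := by
      rw [← Finset.mul_sum, ← h1, Finset.sum_const, Finset.card_univ, Fintype.card_fin,
        smul_eq_mul]
    obtain ⟨i, -, hi⟩ := Finset.exists_le_of_sum_le Finset.univ_nonempty hsum
    exact ⟨i, hi⟩
  set c := (S.filter fun w => P w = i).card with hc
  have hc0 : 0 < c := by
    rcases Nat.eq_zero_or_pos c with h | h
    · rw [h, Nat.mul_zero] at hi
      have := hSne.card_pos
      omega
    · exact h
  obtain ⟨a, ha⟩ := Finset.card_pos.mp hc0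
  have haS : a ∈ S := (Finset.mem_filter.mp ha).1
  have haP : P a = i := (Finset.mem_filter.mp ha).2
  have hsub : G.neighborFinset a ⊆ insert v S \ (S.filter fun w => P w = i) := by
    intro w hw
    rw [SimpleGraph.mem_neighborFinset] at hw
    rcases hcl a haS w hw with rfl | hwS
    · refine Finset.mem_sdiff.mpr ⟨Finset.mem_insert_self _ _, ?_⟩
      intro hmem; exact hv (Finset.mem_filter.mp hmem).1
    · refine Finset.mem_sdiff.mpr ⟨Finset.mem_insert_of_mem hwS, ?_⟩
      intro hmem
      exact hP a w hw (by rw [haP, (Finset.mem_filter.mp hmem).2])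
  have hdeg : G.degree a ≤ S.card + 1 - c := by
    rw [← SimpleGraph.card_neighborFinset_eq_degree]
    calc (G.neighborFinset a).card
        ≤ (insert v S \ (S.filter fun w => P w = i)).card := Finset.card_le_card hsub
      _ = (insert v S).card - c :=
          Finset.card_sdiff_of_subset ((Finset.filter_subset _ _).trans (Finset.subset_insert _ _))
      _ = S.card + 1 - c := by rw [Finset.card_insert_of_notMem hv]
  have hcle : c ≤ S.card := Finset.card_le_card (Finset.filter_subset _ _)
  have hmin := G.minDegree_le_degree a
  exact ⟨c, hi, by omega⟩

/-- Let `k ≥ 3`, let `n ≥ 2k` be divisible by `k`, and let `G` be a balanced `k`-partite graph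
on `n` vertices with `δ(G) ≥ ⌈n/2⌉ + ⌊(n+2)/(2⌈(k+1)/2⌉)⌋ − n/k`.  Unless `k` is even and
`n = 2k`, the graph `G` is 2-connected. -/
theorem balanced_kpartite_two_connected
    {V : Type*} [Fintype V] [DecidableEq V] (G : SimpleGraph V) [DecidableRel G.Adj]
    (k n : ℕ) (hk : 3 ≤ k) (hn : 2 * k ≤ n) (hcard : Fintype.card V = n) (hdvd : k ∣ n)
    (hG : IsBalancedKPartite G k)
    (hδ : degBound n k ≤ (G.minDegree : ℚ))
    (hexc : ¬ (Even k ∧ n = 2 * k)) :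
    TwoConnected G := by
  classical
  obtain ⟨P, hPcard, hPadj⟩ := hG
  obtain ⟨m, hnm⟩ := hdvd
  have hk0 : 0 < k := by omega
  have hm2 : 2 ≤ m := by
    by_contra h
    push_neg at h
    have h2 : k * m ≤ k * 1 := Nat.mul_le_mul_left k (by omega)
    rw [Nat.mul_one] at h2
    omega
  have hn6 : 6 ≤ n := by
    have h2 : 3 * 2 ≤ k * m := Nat.mul_le_mul hk hm2
    omega
  have hexc' : ¬ (Even k ∧ m = 2) := by
    rintro ⟨he, hm'⟩
    exact hexc ⟨he, by rw [hnm, hm']; ring⟩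
  haveI : Nonempty V := by
    rw [← Fintype.card_pos_iff]; omega
  refine ⟨by omega, ?_⟩
  intro v
  rw [connected_iff]
  have hnev : Nonempty ({w : V | w ≠ v}) := by
    obtain ⟨w, hw⟩ := Fintype.exists_ne_of_one_lt_card (by omega) v
    exact ⟨⟨w, hw⟩⟩
  refine ⟨?_, hnev⟩
  by_contra hpre
  unfold SimpleGraph.Preconnected at hpre
  push_neg at hpre
  obtain ⟨x, y, hxy⟩ := hpre
  set H := G.induce {w : V | w ≠ v} with hH
  set A : Finset V :=
    Finset.univ.filter (fun w => ∃ h : w ∈ {w : V | w ≠ v}, H.Reachable x ⟨w, h⟩) with hA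
  set B : Finset V := Finset.univ.filter (fun w => w ≠ v) \ A with hB
  have hAclosed : ∀ a ∈ A, ∀ w, G.Adj a w → w = v ∨ w ∈ A := by
    intro a ha w hadj
    by_cases hwv : w = v
    · exact Or.inl hwv
    · right
      obtain ⟨-, hav, hreach⟩ := Finset.mem_filter.mp ha
      refine Finset.mem_filter.mpr ⟨Finset.mem_univ _, hwv, ?_⟩
      exact hreach.trans (SimpleGraph.Adj.reachable
        (show H.Adj ⟨a, hav⟩ ⟨w, hwv⟩ from hadj))
  have hvA : v ∉ A := by
    intro h
    obtain ⟨-, hvv, -⟩ := Finset.mem_filter.mp h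
    exact hvv rfl
  have hvB : v ∉ B := by
    intro h
    exact (Finset.mem_filter.mp (Finset.mem_sdiff.mp h).1).2 rfl
  have hBclosed : ∀ b ∈ B, ∀ w, G.Adj b w → w = v ∨ w ∈ B := by
    intro b hb w hadj
    by_cases hwv : w = v
    · exact Or.inl hwv
    · right
      obtain ⟨hbf, hbA⟩ := Finset.mem_sdiff.mp hb
      refine Finset.mem_sdiff.mpr ⟨Finset.mem_filter.mpr ⟨Finset.mem_univ _, hwv⟩, ?_⟩
      intro hwA
      rcases hAclosed w hwA b hadj.symm with rfl | hbA'
      · exact (Finset.mem_filter.mp hbf).2 rfl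
      · exact hbA hbA'
  have hxA : ↑x ∈ A := by
    refine Finset.mem_filter.mpr ⟨Finset.mem_univ _, x.2, ?_⟩
    exact SimpleGraph.Reachable.refl x
  have hyB : ↑y ∈ B := by
    refine Finset.mem_sdiff.mpr ⟨Finset.mem_filter.mpr ⟨Finset.mem_univ _, y.2⟩, ?_⟩
    intro hyA
    obtain ⟨-, hyv, hreach⟩ := Finset.mem_filter.mp hyA
    exact hxy hreach
  have hAsub : A ⊆ Finset.univ.filter (fun w => w ≠ v) := by
    intro a ha
    obtain ⟨-, hav, -⟩ := Finset.mem_filter.mp ha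
    exact Finset.mem_filter.mpr ⟨Finset.mem_univ _, hav⟩
  have hfcard : (Finset.univ.filter (fun w => w ≠ v)).card = n - 1 := by
    rw [Finset.filter_ne', Finset.card_erase_of_mem (Finset.mem_univ v), Finset.card_univ,
      hcard]
  have hBcard : B.card = n - 1 - A.card := by
    rw [hB, Finset.card_sdiff_of_subset hAsub, hfcard]
  have hAcard_le : A.card ≤ n - 1 := by
    have := Finset.card_le_card hAsub
    omega
  have hδ' : (n+1)/2 + (n+2)/(2*((k+2)/2)) ≤ G.minDegree + m := by
    rw [degBound_eq n k m hk hnm] at hδ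
    have h := sub_le_iff_le_add.mp hδ
    exact_mod_cast h
  rcases le_total A.card B.card with hAB | hAB
  · obtain ⟨c, hc1, hc2⟩ := side_bound G hk0 P hPadj v A ⟨↑x, hxA⟩ hvA hAclosed
    exact final_contra k m n G.minDegree A.card c hk hm2 hnm hexc' (by omega) hc1 hc2 hδ'
  · obtain ⟨c, hc1, hc2⟩ := side_bound G hk0 P hPadj v B ⟨↑y, hyB⟩ hvB hBclosed
    exact final_contra k m n G.minDegree B.card c hk hm2 hnm hexc' (by omega) hc1 hc2 hδ'
end

section
/- Let k ≥ 4 be even, let n = 2k, and let G be a balanced k-partite graph on n vertices with parts V_1,…,V_k (each of size 2) and δ(G) ≥ n/2 − 1. If G is not 2-connected, then there exists a set X ⊆ V(G) with |X ∩ V_i| = 1 for every i ∈ [k] such that: X induces a complete graph in G; every vertex of Y := V(G)∖X has at least k−1 neighbors in Y ∪ X; and there is a vertex c ∈ X such that every edge of G between X and Y is incident to c. -/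
open SimpleGraph Finset

theorem aux_struct {V : Type*} [Fintype V] [DecidableEq V] (G : SimpleGraph V) [DecidableRel G.Adj]
    (k : ℕ) (hk : 4 ≤ k) (hcard : Fintype.card V = 2 * k)
    (P : Fin k → Finset V)
    (hdisj : ∀ i j, i ≠ j → Disjoint (P i) (P j))
    (hcover : ∀ v : V, ∃ i, v ∈ P i)
    (hindep : ∀ i, ∀ u ∈ P i, ∀ v ∈ P i, ¬ G.Adj u v)
    (hdeg : ∀ w, k - 1 ≤ G.degree w)
    (v : V) (A : Finset V) (hvA : v ∉ A) (hAcard : A.card = k - 1)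
    (hclosed : ∀ w ∈ A, ∀ u, G.Adj w u → u = v ∨ u ∈ A) :
    ∃ X : Finset V,
      (∀ i, (X ∩ P i).card = 1) ∧
      (∀ u ∈ X, ∀ v ∈ X, u ≠ v → G.Adj u v) ∧
      (∀ y ∈ Finset.univ \ X,
        k - 1 ≤ (((Finset.univ \ X) ∪ X).filter (fun w => G.Adj y w)).card) ∧
      (∃ c ∈ X, ∀ x ∈ X, ∀ y ∈ Finset.univ \ X, G.Adj x y → x = c ∨ y = c) := by
  classical
  set X : Finset V := insert v A with hX
  have hXcard : X.card = k := by
    rw [hX, Finset.card_insert_of_notMem hvA, hAcard]; omega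
  -- every w ∈ A is adjacent to everything in X except itself
  have hnb : ∀ w ∈ A, G.neighborFinset w = X.erase w := by
    intro w hw
    have hsub : G.neighborFinset w ⊆ X.erase w := by
      intro u hu
      rw [mem_neighborFinset] at hu
      rcases hclosed w hw u hu with h | h
      · exact Finset.mem_erase.2 ⟨(G.ne_of_adj hu).symm, h ▸ Finset.mem_insert_self v A⟩
      · exact Finset.mem_erase.2 ⟨(G.ne_of_adj hu).symm, Finset.mem_insert_of_mem h⟩
    have hc : (X.erase w).card ≤ (G.neighborFinset w).card := by
      have : (X.erase w).card = k - 1 := by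
        rw [Finset.card_erase_of_mem (Finset.mem_insert_of_mem hw), hXcard]
      rw [this]; exact hdeg w
    exact (Finset.eq_of_subset_of_card_le hsub hc)
  have hadj : ∀ w ∈ A, ∀ u ∈ X, u ≠ w → G.Adj w u := by
    intro w hw u hu hne
    have : u ∈ G.neighborFinset w := by
      rw [hnb w hw]; exact Finset.mem_erase.2 ⟨hne, hu⟩
    rwa [mem_neighborFinset] at this
  have hcomplete : ∀ u ∈ X, ∀ w ∈ X, u ≠ w → G.Adj u w := by
    intro u hu w hw hne
    rcases Finset.mem_insert.1 hu with rfl | hu'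
    · have hw' : w ∈ A := by
        rcases Finset.mem_insert.1 hw with rfl | h
        · exact absurd rfl hne
        · exact h
      exact (hadj w hw' u (Finset.mem_insert_self _ _) hne).symm
    · exact hadj u hu' w hw (Ne.symm hne)
  refine ⟨X, ?_, hcomplete, ?_, ?_⟩
  · -- transversal
    have hle : ∀ i, (X ∩ P i).card ≤ 1 := by
      intro i
      by_contra h
      push_neg at h
      obtain ⟨x, hx, y, hy, hxy⟩ := Finset.one_lt_card.1 h
      have := hcomplete x (Finset.mem_inter.1 hx).1 y (Finset.mem_inter.1 hy).1 hxy
      exact hindep i x (Finset.mem_inter.1 hx).2 y (Finset.mem_inter.1 hy).2 this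
    have hsum : ∑ i : Fin k, (X ∩ P i).card = k := by
      have hf : ∀ x ∈ X, (hcover x).choose ∈ (Finset.univ : Finset (Fin k)) := by
        intro x _; exact Finset.mem_univ _
      have hfib := Finset.card_eq_sum_card_fiberwise hf
      have heq : ∀ i ∈ (Finset.univ : Finset (Fin k)),
          (X ∩ P i).card = (X.filter (fun a => (hcover a).choose = i)).card := by
        intro i _
        congr 1
        ext x
        rw [Finset.mem_inter, Finset.mem_filter]
        constructor
        · rintro ⟨hx, hpx⟩
          refine ⟨hx, ?_⟩
          by_contra hne
          exact (Finset.disjoint_left.1 (hdisj _ _ hne) (hcover x).choose_spec) hpx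
        · rintro ⟨hx, hfx⟩
          exact ⟨hx, hfx ▸ (hcover x).choose_spec⟩
      rw [Finset.sum_congr rfl heq, ← hfib, hXcard]
    intro i
    by_contra hne
    have h0 : (X ∩ P i).card = 0 := by
      have := hle i; omega
    have h1 : ∑ j ∈ (Finset.univ : Finset (Fin k)).erase i, (X ∩ P j).card ≤ k - 1 := by
      calc ∑ j ∈ (Finset.univ : Finset (Fin k)).erase i, (X ∩ P j).card
          ≤ ∑ j ∈ (Finset.univ : Finset (Fin k)).erase i, 1 :=
            Finset.sum_le_sum (fun j _ => hle j)
        _ = k - 1 := by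
            rw [Finset.sum_const, smul_eq_mul, mul_one,
              Finset.card_erase_of_mem (Finset.mem_univ i), Finset.card_univ, Fintype.card_fin]
    have h2 : ∑ j : Fin k, (X ∩ P j).card
        = (X ∩ P i).card + ∑ j ∈ (Finset.univ : Finset (Fin k)).erase i, (X ∩ P j).card := by
      rw [← Finset.add_sum_erase _ _ (Finset.mem_univ i)]
    omega
  · -- degree condition
    intro y _
    have huniv : ((Finset.univ \ X) ∪ X) = (Finset.univ : Finset V) := by
      rw [Finset.sdiff_union_self_eq_union]; simp
    rw [huniv]
    have : (Finset.univ.filter (fun w => G.Adj y w)) = G.neighborFinset y := by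
      ext w; simp [mem_neighborFinset]
    rw [this]
    exact hdeg y
  · -- cut vertex
    refine ⟨v, Finset.mem_insert_self _ _, ?_⟩
    intro x hx y hy hadjxy
    rcases Finset.mem_insert.1 hx with rfl | hx'
    · exact Or.inl rfl
    · rcases hclosed x hx' y hadjxy with h | h
      · exact Or.inr h
      · exact absurd (Finset.mem_insert_of_mem h) (Finset.mem_sdiff.1 hy).2

/-- Let `k ≥ 4` be even, let `G` be a balanced `k`-partite graph on `n = 2k` vertices with
parts `P 0, …, P (k-1)` (each of size 2) and `δ(G) ≥ n/2 − 1 = k − 1`.  If `G` is not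
2-connected, then there is a transversal `X` (one vertex per part) inducing a complete
graph, such that every vertex of `Y := V ∖ X` has at least `k − 1` neighbours in `Y ∪ X`,
and some vertex `c ∈ X` is incident to every edge between `X` and `Y`. -/
theorem not_two_connected_structure
    {V : Type*} [Fintype V] [DecidableEq V] (G : SimpleGraph V) [DecidableRel G.Adj]
    (k : ℕ) (hk : 4 ≤ k) (hke : Even k) (hcard : Fintype.card V = 2 * k)
    (P : Fin k → Finset V)
    (hsize : ∀ i, (P i).card = 2)
    (hdisj : ∀ i j, i ≠ j → Disjoint (P i) (P j))
    (hcover : ∀ v : V, ∃ i, v ∈ P i)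
    (hindep : ∀ i, ∀ u ∈ P i, ∀ v ∈ P i, ¬ G.Adj u v)
    (hδ : k - 1 ≤ G.minDegree)
    (h2 : ¬ TwoConnected G) :
    ∃ X : Finset V,
      (∀ i, (X ∩ P i).card = 1) ∧
      (∀ u ∈ X, ∀ v ∈ X, u ≠ v → G.Adj u v) ∧
      (∀ y ∈ Finset.univ \ X,
        k - 1 ≤ (((Finset.univ \ X) ∪ X).filter (fun w => G.Adj y w)).card) ∧
      (∃ c ∈ X, ∀ x ∈ X, ∀ y ∈ Finset.univ \ X, G.Adj x y → x = c ∨ y = c) := by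
  classical
  have hdeg : ∀ w, k - 1 ≤ G.degree w := fun w => hδ.trans (G.minDegree_le_degree w)
  have h3 : 3 ≤ Fintype.card V := by omega
  rw [TwoConnected] at h2
  push_neg at h2
  obtain ⟨v, hv⟩ := h2 h3
  set H := G.induce {w : V | w ≠ v} with hH
  have hne : Nonempty {w : V // w ≠ v} := by
    obtain ⟨u, hu⟩ := Fintype.exists_ne_of_one_lt_card (by omega) v
    exact ⟨⟨u, hu⟩⟩
  rw [SimpleGraph.connected_iff] at hv
  push_neg at hv
  have hpre : ¬ H.Preconnected := fun h => (hv h).false hne.some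
  rw [SimpleGraph.Preconnected] at hpre
  push_neg at hpre
  obtain ⟨a, b, hab⟩ := hpre
  set A : Finset V := Finset.univ.filter (fun w => ∃ h : w ≠ v, H.Reachable a ⟨w, h⟩) with hA
  have hvA : v ∉ A := by
    intro h
    obtain ⟨h', -⟩ := (Finset.mem_filter.1 h).2
    exact h' rfl
  have hmemA : ∀ w (h : w ≠ v), H.Reachable a ⟨w, h⟩ → w ∈ A :=
    fun w h hr => Finset.mem_filter.2 ⟨Finset.mem_univ _, h, hr⟩
  have haA : (a : V) ∈ A := hmemA a.1 a.2 (by rw [Subtype.coe_eta])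
  have hbA : (b : V) ∉ A := by
    intro h
    obtain ⟨h', hr⟩ := (Finset.mem_filter.1 h).2
    rw [Subtype.coe_eta] at hr
    exact hab hr
  have hcl : ∀ w ∈ A, ∀ u, G.Adj w u → u = v ∨ u ∈ A := by
    intro w hw u hadj
    by_cases hu : u = v
    · exact Or.inl hu
    · refine Or.inr ?_
      obtain ⟨hw', hr⟩ := (Finset.mem_filter.1 hw).2
      refine hmemA u hu (hr.trans (SimpleGraph.Adj.reachable ?_))
      show G.Adj w u
      exact hadj
  set B : Finset V := Finset.univ \ insert v A with hB
  have hvB : v ∉ B := fun h => (Finset.mem_sdiff.1 h).2 (Finset.mem_insert_self _ _)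
  have hclB : ∀ w ∈ B, ∀ u, G.Adj w u → u = v ∨ u ∈ B := by
    intro w hw u hadj
    by_cases hu : u = v
    · exact Or.inl hu
    · refine Or.inr (Finset.mem_sdiff.2 ⟨Finset.mem_univ _, fun hmem => ?_⟩)
      rcases Finset.mem_insert.1 hmem with rfl | huA
      · exact hu rfl
      · rcases hcl u huA w hadj.symm with h | h
        · exact (Finset.mem_sdiff.1 hw).2 (h ▸ Finset.mem_insert_self _ _)
        · exact (Finset.mem_sdiff.1 hw).2 (Finset.mem_insert_of_mem h)
  -- generic degree bound
  have hbound : ∀ (S : Finset V) (w : V), w ∈ S → v ∉ S →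
      (∀ x ∈ S, ∀ u, G.Adj x u → u = v ∨ u ∈ S) → k - 1 ≤ S.card := by
    intro S w hw hvS hclS
    have hsub : G.neighborFinset w ⊆ (insert v S).erase w := by
      intro u hu
      rw [SimpleGraph.mem_neighborFinset] at hu
      rcases hclS w hw u hu with h | h
      · exact Finset.mem_erase.2 ⟨(G.ne_of_adj hu).symm, h ▸ Finset.mem_insert_self v S⟩
      · exact Finset.mem_erase.2 ⟨(G.ne_of_adj hu).symm, Finset.mem_insert_of_mem h⟩
    have := Finset.card_le_card hsub
    rw [Finset.card_erase_of_mem (Finset.mem_insert_of_mem hw),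
      Finset.card_insert_of_notMem hvS] at this
    have hd := hdeg w
    rw [SimpleGraph.degree] at hd
    omega
  have hAge : k - 1 ≤ A.card := hbound A a.1 haA hvA hcl
  have hbB : (b : V) ∈ B := by
    refine Finset.mem_sdiff.2 ⟨Finset.mem_univ _, fun hmem => ?_⟩
    rcases Finset.mem_insert.1 hmem with h | h
    · exact b.2 h
    · exact hbA h
  have hBge : k - 1 ≤ B.card := hbound B b.1 hbB hvB hclB
  have hABcard : A.card + 1 + B.card = 2 * k := by
    have hsub : insert v A ⊆ Finset.univ := Finset.subset_univ _
    have := Finset.card_sdiff_of_subset hsub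
    rw [← hB, Finset.card_univ, hcard, Finset.card_insert_of_notMem hvA] at this
    have hle := Finset.card_le_card hsub
    rw [Finset.card_univ, hcard, Finset.card_insert_of_notMem hvA] at hle
    omega
  by_cases hAc : A.card = k - 1
  · exact aux_struct G k hk hcard P hdisj hcover hindep hdeg v A hvA hAc hcl
  · have hBc : B.card = k - 1 := by omega
    exact aux_struct G k hk hcard P hdisj hcover hindep hdeg v B hvB hBc hclB
end
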